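/- arXiv:1412.0310 — 5 statements merged into one kernel-verified Lean document; each statement's English description precedes it below -/
import Mathlib

section
/- Let p > q ≥ 2 be integers, r = gcd(p−1, q−1), m = (p−1)(q+1)/(2r), n = (p+1)(q−1)/(2r), A = 1/p^{1/(p−1)}, B = 1/q^{1/(q−1)}, C₀ = ((p−1)B)/((q−1)A) > 0, c ∈ ℝ, and ε ∈ {1, −1}. Define T(θ, s) = ε·s·sin(nθ + c) + C₀·sin(mθ). Then the number of solutions of T(θ, s) = 0 in θ ∈ [0, 2π) is monotone decreasing in s ∈ (0, ∞): for all 0 < s₁ ≤ s₂, Set.ncard {θ ∈ [0, 2π) | T(θ, s₂) = 0} ≤ Set.ncard {θ ∈ [0, 2π) | T(θ, s₁) = 0}. -/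
open Real Set Filter Topology

namespace NZ

noncomputable section

/-! ### Basic definitions -/

def ff (c n θ : ℝ) : ℝ := Real.sin (n * θ + c)
def gg (γ m θ : ℝ) : ℝ := γ * Real.sin (m * θ)
def tt (γ c m n s θ : ℝ) : ℝ := s * ff c n θ + gg γ m θ
def psi (γ c m n θ : ℝ) : ℝ :=
  if ff c n θ = 0 then -(γ * m * Real.cos (m * θ)) / (n * Real.cos (n * θ + c))
  else -(gg γ m θ) / ff c n θ
def ffd (c n θ : ℝ) : ℝ := n * Real.cos (n * θ + c)
def ggd (γ m θ : ℝ) : ℝ := γ * m * Real.cos (m * θ)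
def hh (γ c m n s θ : ℝ) : ℝ := -(tt γ c m n s θ) * ff c n θ
def dH (γ c m n s θ : ℝ) : ℝ :=
  -(s * ffd c n θ + ggd γ m θ) * ff c n θ - tt γ c m n s θ * ffd c n θ
def ddH (γ c m n s θ : ℝ) : ℝ :=
  -(s * (-(n^2) * ff c n θ) + (-(m^2) * gg γ m θ)) * ff c n θ
  - 2*(s * ffd c n θ + ggd γ m θ) * ffd c n θ
  - tt γ c m n s θ * (-(n^2) * ff c n θ)

/-! ### Derivatives -/

lemma hasDerivAt_ff (c n θ : ℝ) : HasDerivAt (ff c n) (ffd c n θ) θ := by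
  have h1 : HasDerivAt (fun x : ℝ => n * x + c) n θ := by
    simpa using ((hasDerivAt_id θ).const_mul n).add_const c
  have := (Real.hasDerivAt_sin (n * θ + c)).comp θ h1
  show HasDerivAt (Real.sin ∘ fun x => n * x + c) (ffd c n θ) θ; simpa [ffd, mul_comm] using this

lemma hasDerivAt_ffd (c n θ : ℝ) : HasDerivAt (ffd c n) (-(n^2) * ff c n θ) θ := by
  have h1 : HasDerivAt (fun x : ℝ => n * x + c) n θ := by
    simpa using ((hasDerivAt_id θ).const_mul n).add_const c
  have h2 := ((Real.hasDerivAt_cos (n * θ + c)).comp θ h1).const_mul n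
  have h3 : n * (-Real.sin (n * θ + c) * n) = -(n^2) * ff c n θ := by simp [ff]; ring
  rw [h3] at h2
  exact h2

lemma hasDerivAt_gg (γ m θ : ℝ) : HasDerivAt (gg γ m) (ggd γ m θ) θ := by
  have h1 : HasDerivAt (fun x : ℝ => m * x) m θ := by
    simpa using (hasDerivAt_id θ).const_mul m
  have h2 := ((Real.hasDerivAt_sin (m * θ)).comp θ h1).const_mul γ
  have h3 : γ * (Real.cos (m * θ) * m) = ggd γ m θ := by simp [ggd]; ring
  rw [h3] at h2
  exact h2

lemma hasDerivAt_ggd (γ m θ : ℝ) : HasDerivAt (ggd γ m) (-(m^2) * gg γ m θ) θ := by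
  have h1 : HasDerivAt (fun x : ℝ => m * x) m θ := by
    simpa using (hasDerivAt_id θ).const_mul m
  have h2 := ((Real.hasDerivAt_cos (m * θ)).comp θ h1).const_mul (γ * m)
  have h3 : γ * m * (-Real.sin (m * θ) * m) = -(m^2) * gg γ m θ := by simp [gg]; ring
  rw [h3] at h2
  have h4 : (fun x => γ * m * Real.cos (m * x)) = ggd γ m := by
    funext x; simp [ggd]
  rw [← h4]
  exact h2

lemma hasDerivAt_tt (γ c m n s θ : ℝ) :
    HasDerivAt (tt γ c m n s) (s * ffd c n θ + ggd γ m θ) θ := by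
  have := ((hasDerivAt_ff c n θ).const_mul s).add (hasDerivAt_gg γ m θ)
  exact this

lemma hasDerivAt_hh (γ c m n s θ : ℝ) : HasDerivAt (hh γ c m n s) (dH γ c m n s θ) θ := by
  have h2 := ((hasDerivAt_tt γ c m n s θ).neg).mul (hasDerivAt_ff c n θ)
  have h3 : -(s * ffd c n θ + ggd γ m θ) * ff c n θ + -tt γ c m n s θ * ffd c n θ
      = dH γ c m n s θ := by simp [dH]; ring
  simp only [Pi.neg_apply] at h2; rw [h3] at h2
  exact h2

lemma hasDerivAt_dH (γ c m n s θ : ℝ) : HasDerivAt (dH γ c m n s) (ddH γ c m n s θ) θ := by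
  have h1 := (((hasDerivAt_ffd c n θ).const_mul s).add (hasDerivAt_ggd γ m θ)).neg.mul
      (hasDerivAt_ff c n θ)
  have h2 := (hasDerivAt_tt γ c m n s θ).mul (hasDerivAt_ffd c n θ)
  have h4 := h1.sub h2
  have h5 : -(s * (-(n ^ 2) * ff c n θ) + -(m ^ 2) * gg γ m θ) * ff c n θ +
        -(s * ffd c n θ + ggd γ m θ) * ffd c n θ -
        ((s * ffd c n θ + ggd γ m θ) * ffd c n θ + tt γ c m n s θ * (-(n ^ 2) * ff c n θ))
      = ddH γ c m n s θ := by simp [ddH]; ring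
  simp only [Pi.neg_apply, Pi.add_apply] at h4; rw [h5] at h4
  have h6 : (fun x => -(s * ffd c n x + ggd γ m x) * ff c n x - tt γ c m n s x * ffd c n x)
      = dH γ c m n s := by funext x; simp [dH]
  rw [← h6]
  exact h4

lemma cont_ff (c n : ℝ) : Continuous (ff c n) := by
  have : Continuous fun x : ℝ => n * x + c := by continuity
  exact Real.continuous_sin.comp this

lemma cont_gg (γ m : ℝ) : Continuous (gg γ m) := by
  have : Continuous fun x : ℝ => m * x := by continuity
  exact continuous_const.mul (Real.continuous_sin.comp this)

lemma cont_tt (γ c m n s : ℝ) : Continuous (tt γ c m n s) :=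
  (continuous_const.mul (cont_ff c n)).add (cont_gg γ m)

/-! ### General helper lemmas -/

/-- If the derivative is positive, there are points slightly to the left with smaller value. -/
lemma left_lt_of_deriv_pos {u : ℝ → ℝ} {u' θ₀ : ℝ} (h : HasDerivAt u u' θ₀)
    (hu' : 0 < u') {δ : ℝ} (hδ : 0 < δ) : ∃ x, θ₀ - δ < x ∧ x < θ₀ ∧ u x < u θ₀ := by
  have hs := hasDerivAt_iff_tendsto_slope.1 h
  have hs' : Tendsto (slope u θ₀) (𝓝[<] θ₀) (𝓝 u') :=
    hs.mono_left (nhdsWithin_mono _ (fun x hx => ne_of_lt hx))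
  have h1 : ∀ᶠ x in 𝓝[<] θ₀, 0 < slope u θ₀ x := hs'.eventually_const_lt hu'
  have h2 : ∀ᶠ x in 𝓝[<] θ₀, x ∈ Ioo (θ₀ - δ) θ₀ :=
    Ioo_mem_nhdsLT_of_mem ⟨by linarith, le_refl _⟩
  obtain ⟨x, hx1, hx2⟩ := (h1.and h2).exists
  refine ⟨x, hx2.1, hx2.2, ?_⟩
  have hne : x - θ₀ ≠ 0 := by intro hc; exact absurd (by linarith : x = θ₀) (ne_of_lt hx2.2)
  have : u x - u θ₀ = slope u θ₀ x * (x - θ₀) := by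
    rw [slope_def_field]; field_simp
  nlinarith [hx1, hx2.2, this]

lemma right_lt_of_deriv_neg {u : ℝ → ℝ} {u' θ₀ : ℝ} (h : HasDerivAt u u' θ₀)
    (hu' : u' < 0) {δ : ℝ} (hδ : 0 < δ) : ∃ x, θ₀ < x ∧ x < θ₀ + δ ∧ u x < u θ₀ := by
  have hs := hasDerivAt_iff_tendsto_slope.1 h
  have hs' : Tendsto (slope u θ₀) (𝓝[>] θ₀) (𝓝 u') :=
    hs.mono_left (nhdsWithin_mono _ (fun x hx => ne_of_gt hx))
  have h1 : ∀ᶠ x in 𝓝[>] θ₀, slope u θ₀ x < 0 := hs'.eventually_lt_const hu'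
  have h2 : ∀ᶠ x in 𝓝[>] θ₀, x ∈ Ioo θ₀ (θ₀ + δ) :=
    Ioo_mem_nhdsGT_of_mem ⟨le_refl _, by linarith⟩
  obtain ⟨x, hx1, hx2⟩ := (h1.and h2).exists
  refine ⟨x, hx2.1, hx2.2, ?_⟩
  have hne : x - θ₀ ≠ 0 := by intro hc; exact absurd (by linarith : x = θ₀) (ne_of_gt hx2.1)
  have : u x - u θ₀ = slope u θ₀ x * (x - θ₀) := by
    rw [slope_def_field]; field_simp
  nlinarith [hx1, hx2.1, this]

/-- Second derivative test: strict local maximum. -/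
lemma strict_local_max_of_deriv2_neg (u u' u'' : ℝ → ℝ)
    (hu : ∀ x, HasDerivAt u (u' x) x) (hu' : ∀ x, HasDerivAt u' (u'' x) x)
    (θ₀ : ℝ) (h1 : u' θ₀ = 0) (h2 : u'' θ₀ < 0) :
    ∃ δ > 0, ∀ x, x ≠ θ₀ → |x - θ₀| < δ → u x < u θ₀ := by
  have hs := hasDerivAt_iff_tendsto_slope.1 (hu' θ₀)
  have h3 : ∀ᶠ x in 𝓝[≠] θ₀, slope u' θ₀ x < 0 := hs.eventually_lt_const h2
  rw [eventually_nhdsWithin_iff, Metric.eventually_nhds_iff] at h3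
  obtain ⟨δ, hδ, h4⟩ := h3
  refine ⟨δ, hδ, fun x hx hxδ => ?_⟩
  have hd : ∀ y, y ≠ θ₀ → |y - θ₀| < δ → u' y * (y - θ₀) < 0 := by
    intro y hy hyδ
    have := h4 (by simpa [Real.dist_eq] using hyδ) hy
    rw [slope_def_field, h1, sub_zero] at this
    have hyne : y - θ₀ ≠ 0 := sub_ne_zero.2 hy
    have hsq : (0:ℝ) < (y - θ₀)^2 := by positivity
    have h6 := mul_neg_of_neg_of_pos this hsq
    have h7 : u' y / (y - θ₀) * (y - θ₀)^2 = u' y * (y - θ₀) := by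
      field_simp [sub_ne_zero.2 hy]
    linarith [h7 ▸ h6]
  have hcont : ∀ a b : ℝ, ContinuousOn u (Icc a b) :=
    fun a b => fun x _ => ((hu x).continuousAt).continuousWithinAt
  rcases lt_or_gt_of_ne hx with hlt | hgt
  · -- x < θ₀
    obtain ⟨ξ, hξ, hslope⟩ := exists_hasDerivAt_eq_slope u u' hlt (hcont x θ₀)
      (fun y _ => hu y)
    have hξne : ξ ≠ θ₀ := ne_of_lt hξ.2
    have hξδ : |ξ - θ₀| < δ := by
      rw [abs_sub_lt_iff] at hxδ ⊢
      constructor <;> [linarith [hξ.1, hξ.2]; linarith [hξ.1, hξ.2, hxδ.2]]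
    have := hd ξ hξne hξδ
    have hpos : 0 < u' ξ := by
      have h5 : ξ - θ₀ < 0 := by linarith [hξ.2]
      nlinarith
    have heq : u θ₀ - u x = u' ξ * (θ₀ - x) := by
      rw [hslope, div_mul_cancel₀ _ (sub_ne_zero.2 (Ne.symm hx))]
    nlinarith
  · -- θ₀ < x
    obtain ⟨ξ, hξ, hslope⟩ := exists_hasDerivAt_eq_slope u u' hgt (hcont θ₀ x)
      (fun y _ => hu y)
    have hξne : ξ ≠ θ₀ := ne_of_gt hξ.1
    have hξδ : |ξ - θ₀| < δ := by
      rw [abs_sub_lt_iff] at hxδ ⊢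
      constructor <;> [linarith [hξ.1, hξ.2, hxδ.1]; linarith [hξ.1, hξ.2]]
    have := hd ξ hξne hξδ
    have hneg : u' ξ < 0 := by
      have h5 : 0 < ξ - θ₀ := by linarith [hξ.1]
      nlinarith
    have heq : u x - u θ₀ = u' ξ * (x - θ₀) := by
      rw [hslope, div_mul_cancel₀ _ (sub_ne_zero.2 hx)]
    nlinarith

/-- If a continuous function avoids a value `s` on an interval and exceeds it somewhere,
it exceeds it everywhere on the interval. -/
lemma gt_on_Icc_of_ne {F : ℝ → ℝ} {a b s x₀ : ℝ} (hc : ContinuousOn F (Icc a b))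
    (hx₀ : x₀ ∈ Icc a b) (hFx₀ : s < F x₀) (hne : ∀ x ∈ Icc a b, F x ≠ s) :
    ∀ x ∈ Icc a b, s < F x := by
  intro x hx
  by_contra hcon
  push_neg at hcon
  have hlt : F x < s := lt_of_le_of_ne hcon (hne x hx)
  have hsub : uIcc x x₀ ⊆ Icc a b := uIcc_subset_Icc hx hx₀
  have : s ∈ uIcc (F x) (F x₀) := by
    rw [mem_uIcc]; left; exact ⟨le_of_lt hlt, le_of_lt hFx₀⟩
  obtain ⟨y, hy, hFy⟩ := intermediate_value_uIcc (hc.mono hsub) this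
  exact hne y (hsub hy) hFy

lemma exists_greatest_level {F : ℝ → ℝ} {a b s : ℝ} (hc : ContinuousOn F (Icc a b))
    (hne : ∃ x ∈ Icc a b, F x = s) : ∃ φ, IsGreatest {x ∈ Icc a b | F x = s} φ := by
  have hSeq : {x ∈ Icc a b | F x = s} = Icc a b ∩ F ⁻¹' {s} := by
    ext x; simp [mem_inter_iff, mem_preimage]
  have hclosed : IsClosed (Icc a b ∩ F ⁻¹' {s}) :=
    hc.preimage_isClosed_of_isClosed isClosed_Icc isClosed_singleton
  have hcompact : IsCompact {x ∈ Icc a b | F x = s} := by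
    rw [hSeq]
    exact isCompact_Icc.of_isClosed_subset hclosed inter_subset_left
  apply hcompact.exists_isGreatest
  obtain ⟨x, hx, hFx⟩ := hne
  exact ⟨x, hx, hFx⟩

/-- Three distinct elements of an infinite set of reals, sorted. -/
lemma exists_sorted3 {S : Set ℝ} (h : S.Infinite) :
    ∃ x y z, x ∈ S ∧ y ∈ S ∧ z ∈ S ∧ x < y ∧ y < z := by
  obtain ⟨t, hts, _, hcard⟩ := h.exists_subset_ncard_eq 3
  obtain ⟨x, y, z, hxy, hxz, hyz, rfl⟩ := Set.ncard_eq_three.1 hcard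
  have hx : x ∈ S := hts (by simp)
  have hy : y ∈ S := hts (by simp)
  have hz : z ∈ S := hts (by simp)
  rcases lt_trichotomy x y with h1 | h1 | h1
  · rcases lt_trichotomy y z with h2 | h2 | h2
    · exact ⟨x, y, z, hx, hy, hz, h1, h2⟩
    · exact absurd h2 hyz
    · rcases lt_trichotomy x z with h3 | h3 | h3
      · exact ⟨x, z, y, hx, hz, hy, h3, h2⟩
      · exact absurd h3 hxz
      · exact ⟨z, x, y, hz, hx, hy, h3, h1⟩
  · exact absurd h1 hxy
  · rcases lt_trichotomy x z with h2 | h2 | h2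
    · exact ⟨y, x, z, hy, hx, hz, h1, h2⟩
    · exact absurd h2 hxz
    · rcases lt_trichotomy y z with h3 | h3 | h3
      · exact ⟨y, z, x, hy, hz, hx, h3, h2⟩
      · exact absurd h3 hyz
      · exact ⟨z, y, x, hz, hy, hx, h3, h1⟩

end

end NZ
/-! ### psi layer -/

namespace NZ
open Real Set Filter Topology
noncomputable section

variable {γ c m n : ℝ}

lemma psi_eq_of_ne {θ : ℝ} (hf : ff c n θ ≠ 0) :
    psi γ c m n θ = -(gg γ m θ) / ff c n θ := if_neg hf

lemma tt_zero_iff {s θ : ℝ} (hf : ff c n θ ≠ 0) :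
    tt γ c m n s θ = 0 ↔ psi γ c m n θ = s := by
  rw [psi_eq_of_ne hf, tt]
  rw [div_eq_iff hf]
  constructor <;> intro h <;> nlinarith [h]

lemma hh_eq {s θ : ℝ} (hf : ff c n θ ≠ 0) :
    hh γ c m n s θ = (psi γ c m n θ - s) * (ff c n θ)^2 := by
  rw [psi_eq_of_ne hf, hh, tt]
  field_simp
  ring

lemma hh_nonneg_of_psi_ge {s θ : ℝ} (hf : ff c n θ ≠ 0) (h : s ≤ psi γ c m n θ) :
    0 ≤ hh γ c m n s θ := by
  rw [hh_eq hf]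
  have : (0:ℝ) ≤ (ff c n θ)^2 := sq_nonneg _
  nlinarith

lemma psi_lt_of_hh_neg {s θ : ℝ} (hf : ff c n θ ≠ 0) (h : hh γ c m n s θ < 0) :
    psi γ c m n θ < s := by
  rw [hh_eq hf] at h
  have h2 : (0:ℝ) < (ff c n θ)^2 := by positivity
  nlinarith

lemma psi_contAt {θ : ℝ} (hf : ff c n θ ≠ 0) : ContinuousAt (psi γ c m n) θ := by
  have hev : ∀ᶠ x in 𝓝 θ, ff c n x ≠ 0 :=
    (cont_ff c n).continuousAt.eventually_ne hf
  have hc : ContinuousAt (fun x => -(gg γ m x) / ff c n x) θ :=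
    ((cont_gg γ m).continuousAt.neg).div (cont_ff c n).continuousAt hf
  apply hc.congr
  filter_upwards [hev] with x hx
  rw [psi_eq_of_ne hx]

lemma psi_contOn {a b : ℝ} (h : ∀ x ∈ Icc a b, ff c n x ≠ 0) :
    ContinuousOn (psi γ c m n) (Icc a b) :=
  fun x hx => (psi_contAt (h x hx)).continuousWithinAt

/-! ### Windows between consecutive zeros of ff -/

def kk (c n θ : ℝ) : ℤ := ⌊(n*θ+c)/π⌋
def lw (c n θ : ℝ) : ℝ := ((kk c n θ : ℝ)*π - c)/n
def uw (c n θ : ℝ) : ℝ := ((kk c n θ : ℝ)*π + π - c)/n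

variable (hn : 0 < n)
include hn

lemma lw_le (θ : ℝ) : lw c n θ ≤ θ := by
  have h1 : ((kk c n θ : ℝ)) ≤ (n*θ+c)/π := Int.floor_le _
  have h2 : ((kk c n θ : ℝ))*π ≤ n*θ+c := by
    rw [← le_div_iff₀ Real.pi_pos] at *; exact h1
  rw [lw, div_le_iff₀ hn]; linarith

lemma lt_uw (θ : ℝ) : θ < uw c n θ := by
  have h1 : (n*θ+c)/π < (kk c n θ : ℝ) + 1 := Int.lt_floor_add_one _
  have h2 : n*θ+c < ((kk c n θ : ℝ)+1)*π := by
    rw [← div_lt_iff₀ Real.pi_pos]; exact h1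
  rw [uw, lt_div_iff₀ hn]; nlinarith [h2]

lemma ff_lw (θ : ℝ) : ff c n (lw c n θ) = 0 := by
  rw [ff, lw]
  have : n * (((kk c n θ : ℝ)*π - c)/n) + c = (kk c n θ : ℝ)*π := by
    field_simp; ring
  rw [this]
  exact Real.sin_int_mul_pi _

lemma ff_uw (θ : ℝ) : ff c n (uw c n θ) = 0 := by
  rw [ff, uw]
  have : n * ((((kk c n θ) : ℝ)*π + π - c)/n) + c = ((kk c n θ + 1 : ℤ) : ℝ)*π := by
    push_cast; field_simp; ring
  rw [this]
  exact Real.sin_int_mul_pi _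

lemma lw_eq_self_of_ff_zero {θ : ℝ} (hf : ff c n θ = 0) : lw c n θ = θ := by
  obtain ⟨a, ha⟩ := Real.sin_eq_zero_iff.1 hf
  have hk : kk c n θ = a := by
    rw [kk, ← ha]
    rw [mul_div_assoc, div_self (ne_of_gt Real.pi_pos), mul_one]
    exact Int.floor_intCast a
  rw [lw, hk, ha]
  field_simp; ring

lemma lw_lt {θ : ℝ} (hf : ff c n θ ≠ 0) : lw c n θ < θ := by
  rcases lt_or_eq_of_le (lw_le hn θ) with h | h
  · exact h
  · exfalso; exact hf (h ▸ ff_lw hn θ)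

lemma ff_ne_on_window {θ x : ℝ} (h1 : lw c n θ < x) (h2 : x < uw c n θ) :
    ff c n x ≠ 0 := by
  intro hfx
  obtain ⟨a, ha⟩ := Real.sin_eq_zero_iff.1 hfx
  rw [lw, div_lt_iff₀ hn] at h1
  rw [uw, lt_div_iff₀ hn] at h2
  have hlt1 : (kk c n θ : ℝ)*π < (a:ℝ)*π := by nlinarith [ha]
  have hlt2 : (a:ℝ)*π < (kk c n θ : ℝ)*π + π := by nlinarith [ha]
  have e1 : (kk c n θ : ℝ) < (a:ℝ) := by
    have := Real.pi_pos; nlinarith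
  have e2 : (a:ℝ) < (kk c n θ : ℝ) + 1 := by
    have := Real.pi_pos; nlinarith
  have i1 : kk c n θ < a := by exact_mod_cast e1
  have i2 : a < kk c n θ + 1 := by exact_mod_cast e2
  omega

lemma ff_isolated {θ₀ x : ℝ} (hf : ff c n θ₀ = 0) (hx : x ≠ θ₀) (hd : |x - θ₀| < π/n) :
    ff c n x ≠ 0 := by
  intro hfx
  obtain ⟨a, ha⟩ := Real.sin_eq_zero_iff.1 hf
  obtain ⟨b, hb⟩ := Real.sin_eq_zero_iff.1 hfx
  have hdiff : ((b - a : ℤ) : ℝ) * π = n * (x - θ₀) := by push_cast; nlinarith [ha, hb]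
  have habs : |((b - a : ℤ) : ℝ)| * π < π := by
    have h1 : |((b - a : ℤ) : ℝ) * π| = |((b-a : ℤ) : ℝ)| * π := by
      rw [abs_mul, abs_of_pos Real.pi_pos]
    have h2 : |n * (x - θ₀)| = n * |x - θ₀| := by
      rw [abs_mul, abs_of_pos hn]
    have h3 : n * |x - θ₀| < π := by
      rw [lt_div_iff₀ hn] at hd; linarith [hd]
    rw [← h1, hdiff, h2]; exact h3
  have : |((b - a : ℤ) : ℝ)| < 1 := by
    have := Real.pi_pos; nlinarith
  have hba : b - a = 0 := by
    have h9 : |b - a| < 1 := by exact_mod_cast this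
    rw [abs_lt] at h9
    omega
  have : ((b:ℝ)) = a := by exact_mod_cast congrArg Int.cast (by omega : b = a)
  apply hx
  have : (n:ℝ) * x = n * θ₀ := by nlinarith [ha, hb, this]
  have hn' : (n:ℝ) ≠ 0 := ne_of_gt hn
  exact mul_left_cancel₀ hn' this

lemma kk_mono {θ θ' : ℝ} (h : θ ≤ θ') : kk c n θ ≤ kk c n θ' := by
  apply Int.floor_le_floor
  rw [div_le_div_iff_of_pos_right Real.pi_pos]
  nlinarith

omit hn in
lemma window_le (hn : 0 < n) {θ θ' : ℝ} (h : kk c n θ < kk c n θ') : uw c n θ ≤ lw c n θ' := by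
  rw [uw, lw, div_le_div_iff_of_pos_right hn]
  have : ((kk c n θ : ℝ)) + 1 ≤ ((kk c n θ' : ℝ)) := by exact_mod_cast h
  nlinarith [Real.pi_pos, this]

end
end NZ
/-! ### Key local analysis -/

namespace NZ
open Real Set Filter Topology
noncomputable section

variable {γ c m n : ℝ}

/-- At a critical zero with positive level, `hh` has a strict local max (value 0). -/
lemma critmax (hn : 0 < n) (hnm : n < m) {v θ₀ : ℝ} (hv : 0 < v)
    (hf : ff c n θ₀ ≠ 0) (ht : tt γ c m n v θ₀ = 0) (hd : dH γ c m n v θ₀ = 0) :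
    ∃ δ > 0, ∀ x, x ≠ θ₀ → |x - θ₀| < δ → hh γ c m n v x < 0 := by
  have hG : gg γ m θ₀ = -v * ff c n θ₀ := by rw [tt] at ht; linarith
  have hder : v * ffd c n θ₀ + ggd γ m θ₀ = 0 := by
    rw [dH, ht, zero_mul, sub_zero, neg_mul, neg_eq_zero, mul_eq_zero] at hd
    rcases hd with h | h
    · exact h
    · exact absurd h hf
  have hdd : ddH γ c m n v θ₀ = v * (n^2 - m^2) * (ff c n θ₀)^2 := by
    rw [ddH, ht, hG, hder]
    ring
  have hddneg : ddH γ c m n v θ₀ < 0 := by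
    rw [hdd]
    have h1 : n^2 - m^2 < 0 := by nlinarith
    have h2 : (0:ℝ) < (ff c n θ₀)^2 := by positivity
    have h3 := mul_neg_of_neg_of_pos h1 (mul_pos hv h2)
    nlinarith [h3]
  obtain ⟨δ, hδ, hmax⟩ := strict_local_max_of_deriv2_neg (hh γ c m n v) (dH γ c m n v)
    (ddH γ c m n v) (hasDerivAt_hh γ c m n v) (hasDerivAt_dH γ c m n v) θ₀ hd hddneg
  refine ⟨δ, hδ, fun x hx hxδ => ?_⟩
  have h0 : hh γ c m n v θ₀ = 0 := by rw [hh, ht]; ring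
  have := hmax x hx hxδ
  linarith [h0 ▸ this]

/-- `psi` has no interior local minimum with positive value (at regular points). -/
lemma noPosMin (hn : 0 < n) (hnm : n < m) {v θ₀ δ : ℝ} (hv : 0 < v)
    (hf : ff c n θ₀ ≠ 0) (hψ : psi γ c m n θ₀ = v) (hδ : 0 < δ)
    (hmin : ∀ x, |x - θ₀| ≤ δ → v ≤ psi γ c m n x) : False := by
  obtain ⟨δ₁, hδ₁, hffne⟩ : ∃ δ₁ > 0, ∀ x, |x - θ₀| < δ₁ → ff c n x ≠ 0 := by
    have hev : ∀ᶠ x in 𝓝 θ₀, ff c n x ≠ 0 := (cont_ff c n).continuousAt.eventually_ne hf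
    rw [Metric.eventually_nhds_iff] at hev
    obtain ⟨ε, hε, h⟩ := hev
    exact ⟨ε, hε, fun x hx => h (by simpa [Real.dist_eq] using hx)⟩
  have ht : tt γ c m n v θ₀ = 0 := (tt_zero_iff hf).2 hψ
  set δ₂ := min (δ/2) (δ₁/2) with hδ₂def
  have hδ₂ : 0 < δ₂ := by apply lt_min <;> linarith
  have hball : ∀ x, |x - θ₀| < δ₂ → 0 ≤ hh γ c m n v x := by
    intro x hx
    have hx1 : |x - θ₀| ≤ δ := le_of_lt (lt_of_lt_of_le hx (le_trans (min_le_left _ _) (by linarith)))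
    have hx2 : |x - θ₀| < δ₁ := lt_of_lt_of_le hx (le_trans (min_le_right _ _) (by linarith))
    exact hh_nonneg_of_psi_ge (hffne x hx2) (hmin x hx1)
  have hlocmin : IsLocalMin (hh γ c m n v) θ₀ := by
    have h0 : hh γ c m n v θ₀ = 0 := by rw [hh, ht]; ring
    apply Metric.eventually_nhds_iff.2 ⟨δ₂, hδ₂, ?_⟩
    intro y hy
    rw [h0]
    exact hball y (by simpa [Real.dist_eq] using hy)
  have hd0 : dH γ c m n v θ₀ = 0 := by
    have h2 := hlocmin.deriv_eq_zero
    rwa [(hasDerivAt_hh γ c m n v θ₀).deriv] at h2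
  obtain ⟨δ₃, hδ₃, hneg⟩ := critmax hn hnm hv hf ht hd0
  set x := θ₀ + min δ₂ δ₃ / 2 with hxdef
  have hmin23 : 0 < min δ₂ δ₃ := lt_min hδ₂ hδ₃
  have hxne : x ≠ θ₀ := by
    simp only [hxdef]; intro hcon
    have : min δ₂ δ₃ / 2 = 0 := by linarith [congrArg (fun t => t - θ₀) hcon]
    linarith
  have hxabs : |x - θ₀| = min δ₂ δ₃ / 2 := by
    simp only [hxdef, add_sub_cancel_left]
    exact abs_of_pos (by linarith)
  have h1 : hh γ c m n v x < 0 := hneg x hxne (by rw [hxabs]; linarith [min_le_right δ₂ δ₃])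
  have h2 : 0 ≤ hh γ c m n v x := hball x (by rw [hxabs]; linarith [min_le_left δ₂ δ₃])
  linarith

/-- Type contradiction at a "left-type" point that is a one-sided minimum from the left. -/
lemma typeContra (hn : 0 < n) (hnm : n < m) {s₂ θ₂ δ : ℝ} (hs₂ : 0 < s₂)
    (hf : ff c n θ₂ ≠ 0) (hψ : psi γ c m n θ₂ = s₂) (ht : 0 ≤ dH γ c m n s₂ θ₂)
    (hδ : 0 < δ) (hfz : ∀ x, θ₂ - δ ≤ x → x < θ₂ → ff c n x ≠ 0)
    (hge : ∀ x, θ₂ - δ ≤ x → x < θ₂ → s₂ ≤ psi γ c m n x) : False := by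
  have htt : tt γ c m n s₂ θ₂ = 0 := (tt_zero_iff hf).2 hψ
  have h0 : hh γ c m n s₂ θ₂ = 0 := by rw [hh, htt]; ring
  rcases lt_or_eq_of_le ht with htpos | hteq
  · obtain ⟨x, hx1, hx2, hx3⟩ :=
      left_lt_of_deriv_pos (hasDerivAt_hh γ c m n s₂ θ₂) htpos hδ
    rw [h0] at hx3
    have := psi_lt_of_hh_neg (hfz x (by linarith) hx2) hx3
    exact absurd (hge x (by linarith) hx2) (by linarith)
  · obtain ⟨δ₃, hδ₃, hneg⟩ := critmax hn hnm hs₂ hf htt hteq.symm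
    set x := θ₂ - min δ δ₃ / 2 with hxdef
    have hminp : 0 < min δ δ₃ := lt_min hδ hδ₃
    have hxlt : x < θ₂ := by simp only [hxdef]; linarith
    have hxge : θ₂ - δ ≤ x := by
      simp only [hxdef]; linarith [min_le_left δ δ₃]
    have hxabs : |x - θ₂| = min δ δ₃ / 2 := by
      simp only [hxdef]
      rw [show θ₂ - min δ δ₃ / 2 - θ₂ = -(min δ δ₃ / 2) by ring, abs_neg]
      exact abs_of_pos (by linarith)
    have h1 : hh γ c m n s₂ x < 0 :=
      hneg x (ne_of_lt hxlt) (by rw [hxabs]; linarith [min_le_right δ δ₃])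
    have := psi_lt_of_hh_neg (hfz x hxge hxlt) h1
    exact absurd (hge x hxge hxlt) (by linarith)

end
end NZ
/-! ### Trig inequalities and boundary behaviour -/

namespace NZ
open Real Set Filter Topology
noncomputable section

variable {γ c m n : ℝ}

lemma sin_ne_zero_of_abs_lt_pi {x : ℝ} (hx : x ≠ 0) (h : |x| < π) : Real.sin x ≠ 0 := by
  rcases lt_or_gt_of_ne hx with hneg | hpos
  · have h1 : 0 < -x := by linarith
    have h2 : -x < π := by rw [abs_of_neg hneg] at h; exact h
    have := Real.sin_pos_of_pos_of_lt_pi h1 h2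
    rw [Real.sin_neg] at this
    intro hc; rw [hc] at this; simp at this
  · have h2 : x < π := by rw [abs_of_pos hpos] at h; exact h
    exact ne_of_gt (Real.sin_pos_of_pos_of_lt_pi hpos h2)

/-- The key trigonometric inequality. -/
lemma P_pos (hn : 0 < n) (hnm : n < m) {z : ℝ} (hz : z ≠ 0) (hzm : |z| < π/m) :
    0 < Real.sin (n*z) * (m * Real.sin (n*z) - n * Real.sin (m*z)) := by
  have hm : 0 < m := hn.trans hnm
  have main : ∀ w : ℝ, 0 < w → w < π/m →
      0 < Real.sin (n*w) * (m * Real.sin (n*w) - n * Real.sin (m*w)) := by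
    intro w hw hwm
    have hS : 0 < Real.sin (n*w) := by
      apply Real.sin_pos_of_pos_of_lt_pi (by positivity)
      have : n*w < m*w := by nlinarith
      have h2 : m*w < π := by rw [lt_div_iff₀ hm] at hwm; linarith [hwm]
      linarith
    have hmono : StrictMonoOn (fun x => m * Real.sin (n*x) - n * Real.sin (m*x)) (Icc 0 (π/m)) := by
      have hder : ∀ x : ℝ, HasDerivAt (fun x => m * Real.sin (n*x) - n * Real.sin (m*x))
          (m * (Real.cos (n*x) * n) - n * (Real.cos (m*x) * m)) x := by
        intro x
        have h1 : HasDerivAt (fun x : ℝ => n * x) n x := by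
          simpa using (hasDerivAt_id x).const_mul n
        have h2 : HasDerivAt (fun x : ℝ => m * x) m x := by
          simpa using (hasDerivAt_id x).const_mul m
        exact (((Real.hasDerivAt_sin (n*x)).comp x h1).const_mul m).sub
          (((Real.hasDerivAt_sin (m*x)).comp x h2).const_mul n)
      apply strictMonoOn_of_deriv_pos (convex_Icc _ _)
      · exact fun x _ => ((hder x).continuousAt).continuousWithinAt
      · intro x hx
        rw [interior_Icc] at hx
        rw [(hder x).deriv]
        have hcos : Real.cos (m*x) < Real.cos (n*x) := by
          apply Real.cos_lt_cos_of_nonneg_of_le_pi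
          · nlinarith [hx.1]
          · have h9 : x*m < π := (lt_div_iff₀ hm).1 hx.2
            nlinarith [h9]
          · nlinarith [hx.1]
        nlinarith [mul_pos (mul_pos hm hn) (sub_pos.2 hcos)]
    have h0 : (fun x => m * Real.sin (n*x) - n * Real.sin (m*x)) 0 = 0 := by simp
    have hlt := hmono (left_mem_Icc.2 (by positivity)) ⟨le_of_lt hw, le_of_lt hwm⟩ hw
    rw [h0] at hlt
    exact mul_pos hS (by simpa using hlt)
  rcases lt_or_gt_of_ne hz with hneg | hpos
  · have habs : |(-z)| < π/m := by rwa [abs_neg]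
    have := main (-z) (by linarith) (by rw [abs_of_neg hneg] at hzm; linarith [hzm])
    simp only [mul_neg, Real.sin_neg] at this
    nlinarith [this]
  · exact main z hpos (by rwa [abs_of_pos hpos] at hzm)

/-- Strict local maximum of `psi` at a common zero with positive value. -/
lemma cz_max (hn : 0 < n) (hnm : n < m) {θs : ℝ} (hf : ff c n θs = 0)
    (hg : gg γ m θs = 0) (hL : 0 < psi γ c m n θs) :
    ∀ z : ℝ, z ≠ 0 → |z| < π/m →
      ff c n (θs + z) ≠ 0 ∧ psi γ c m n (θs + z) < psi γ c m n θs := by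
  have hm : 0 < m := hn.trans hnm
  have hγ : γ ≠ 0 := by
    intro h
    rw [psi, if_pos hf, h] at hL
    norm_num at hL
  obtain ⟨a, ha⟩ := Real.sin_eq_zero_iff.1 hf
  have hsinm : Real.sin (m * θs) = 0 := by
    rw [gg] at hg
    rcases mul_eq_zero.1 hg with h | h
    · exact absurd h hγ
    · exact h
  obtain ⟨b, hb⟩ := Real.sin_eq_zero_iff.1 hsinm
  set e : ℝ := (-1 : ℝ)^a with hedef
  set e' : ℝ := (-1 : ℝ)^b with he'def
  have hene : e ≠ 0 := zpow_ne_zero _ (by norm_num)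
  have he'ne : e' ≠ 0 := zpow_ne_zero _ (by norm_num)
  have hee : e * e = 1 := by
    rw [hedef, ← zpow_add₀ (by norm_num : (-1:ℝ) ≠ 0),
      show a + a = 2*a by ring, zpow_mul]
    norm_num
  have hcosa : Real.cos (n*θs + c) = e := by
    rw [← ha]
    have := Real.cos_add_int_mul_pi 0 a
    simpa using this
  have hcosb : Real.cos (m*θs) = e' := by
    rw [← hb]
    have := Real.cos_add_int_mul_pi 0 b
    simpa using this
  have hLval : psi γ c m n θs = -(γ*m*e')/(n*e) := by
    rw [psi, if_pos hf, hcosb,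
      show n*θs + c = n*θs + c from rfl]
    rw [show Real.cos (n*θs + c) = e from hcosa]
  set κ : ℝ := γ * e' * e with hκdef
  have hLκ : psi γ c m n θs = -(κ*m)/n := by
    rw [hLval, hκdef]
    field_simp
    linear_combination hee
  have hκneg : κ < 0 := by
    rw [hLκ] at hL
    have h1 : 0 < -(κ*m)/n := hL
    have h2 : 0 < -(κ*m) := by
      by_contra hcon
      push_neg at hcon
      have : -(κ*m)/n ≤ 0 := div_nonpos_of_nonpos_of_nonneg hcon (le_of_lt hn)
      linarith
    nlinarith
  intro z hz hzm
  set S := Real.sin (n*z) with hSdef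
  set T' := Real.sin (m*z) with hTdef
  have hSne : S ≠ 0 := by
    apply sin_ne_zero_of_abs_lt_pi
    · intro hcon
      rcases mul_eq_zero.1 hcon with h | h
      · exact absurd h (ne_of_gt hn)
      · exact hz h
    · rw [abs_mul, abs_of_pos hn]
      have h1 : n * |z| < n * (π/m) := by nlinarith [abs_pos.2 hz]
      have h2 : n*(π/m) < m*(π/m) := by
        apply mul_lt_mul_of_pos_right hnm
        positivity
      have h3 : m*(π/m) = π := by field_simp
      linarith
  have hffz : ff c n (θs + z) = e * S := by
    rw [ff, show n*(θs+z)+c = n*z + (n*θs+c) by ring, ← ha,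
      Real.sin_add_int_mul_pi]
  have hggz : gg γ m (θs + z) = γ * (e' * T') := by
    rw [gg, show m*(θs+z) = m*z + m*θs by ring, ← hb,
      Real.sin_add_int_mul_pi]
  have hffne : ff c n (θs + z) ≠ 0 := by
    rw [hffz]; exact mul_ne_zero hene hSne
  refine ⟨hffne, ?_⟩
  have hpsiz : psi γ c m n (θs + z) = -(κ * T')/S := by
    rw [psi_eq_of_ne hffne, hffz, hggz, hκdef]
    field_simp
    linear_combination T' * hee
  have hP : 0 < S * (m*S - n*T') := P_pos hn hnm hz hzm
  have key : psi γ c m n θs - psi γ c m n (θs + z)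
      = (-κ)/n * ((S * (m*S - n*T'))/S^2) := by
    rw [hLκ, hpsiz]
    field_simp
    ring
  have hpos : 0 < (-κ)/n * ((S * (m*S - n*T'))/S^2) := by
    apply mul_pos (div_pos (by linarith) hn)
    apply div_pos hP (by positivity)
  linarith [key ▸ hpos]

/-- One-sided removable limit of `psi` at a common zero. -/
lemma cz_tendsto (hn : 0 < n) {θs : ℝ} (hf : ff c n θs = 0) (hg : gg γ m θs = 0) :
    Tendsto (psi γ c m n) (𝓝[≠] θs) (𝓝 (psi γ c m n θs)) := by
  have hsin0 : Real.sin (n*θs + c) = 0 := hf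
  have hcosne : Real.cos (n*θs + c) ≠ 0 := by
    intro hc0
    nlinarith [Real.sin_sq_add_cos_sq (n*θs + c), hsin0]
  have hffd : ffd c n θs ≠ 0 := mul_ne_zero (ne_of_gt hn) hcosne
  have hslf : Tendsto (slope (ff c n) θs) (𝓝[≠] θs) (𝓝 (ffd c n θs)) :=
    hasDerivAt_iff_tendsto_slope.1 (hasDerivAt_ff c n θs)
  have hslg : Tendsto (slope (gg γ m) θs) (𝓝[≠] θs) (𝓝 (ggd γ m θs)) :=
    hasDerivAt_iff_tendsto_slope.1 (hasDerivAt_gg γ m θs)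
  have hdiv : Tendsto (fun x => -(slope (gg γ m) θs x) / slope (ff c n) θs x)
      (𝓝[≠] θs) (𝓝 (-(ggd γ m θs) / ffd c n θs)) :=
    Tendsto.div hslg.neg hslf hffd
  have hval : psi γ c m n θs = -(ggd γ m θs) / ffd c n θs := by
    rw [psi, if_pos hf, ggd, ffd]
  rw [hval]
  apply hdiv.congr'
  have hball : ∀ᶠ x in 𝓝 θs, |x - θs| < π/n := by
    have hpn : (0:ℝ) < π/n := by positivity
    exact Metric.eventually_nhds_iff.2 ⟨π/n, hpn, fun {y} hy => by
      simpa [Real.dist_eq] using hy⟩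
  filter_upwards [hball.filter_mono nhdsWithin_le_nhds, self_mem_nhdsWithin]
    with x hx hxne
  have hffx : ff c n x ≠ 0 := ff_isolated hn hf hxne hx
  have hxs : x - θs ≠ 0 := sub_ne_zero.2 hxne
  rw [slope_def_field, slope_def_field, psi_eq_of_ne hffx, hg, hf]
  rw [sub_zero, sub_zero]
  field_simp

end
end NZ
/-! ### Pole behaviour -/

namespace NZ
open Real Set Filter Topology
noncomputable section

variable {γ c m n : ℝ}

lemma ff_sign_const (hn : 0 < n) {θs x y : ℝ} (hf : ff c n θs = 0)
    (hx1 : θs < x) (hx2 : x < θs + π/n) (hy1 : θs < y) (hy2 : y < θs + π/n) :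
    0 < ff c n x * ff c n y := by
  have hne : ∀ t, θs < t → t < θs + π/n → ff c n t ≠ 0 := by
    intro t h1 h2
    apply ff_isolated hn hf (ne_of_gt h1)
    rw [abs_of_pos (by linarith)]
    linarith
  by_contra hcon
  push_neg at hcon
  have hfx : ff c n x ≠ 0 := hne x hx1 hx2
  have hfy : ff c n y ≠ 0 := hne y hy1 hy2
  have h0mem : (0:ℝ) ∈ uIcc (ff c n x) (ff c n y) := by
    rcases mul_nonpos_iff.1 hcon with ⟨h1, h2⟩ | ⟨h1, h2⟩
    · rw [mem_uIcc]; right; exact ⟨h2, h1⟩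
    · rw [mem_uIcc]; left; exact ⟨h1, h2⟩
  obtain ⟨z, hz, hzf⟩ := intermediate_value_uIcc ((cont_ff c n).continuousOn) h0mem
  have hz1 : θs < z := by
    rcases le_total x y with h | h
    · rw [uIcc_of_le h] at hz; linarith [hz.1]
    · rw [uIcc_of_ge h] at hz; linarith [hz.1]
  have hz2 : z < θs + π/n := by
    rcases le_total x y with h | h
    · rw [uIcc_of_le h] at hz; linarith [hz.2]
    · rw [uIcc_of_ge h] at hz; linarith [hz.2]
  exact hne z hz1 hz2 hzf

lemma pole_dichotomy (hn : 0 < n) {θs b' M : ℝ} (hf : ff c n θs = 0)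
    (hg : gg γ m θs ≠ 0) (hb : θs < b') (hb2 : b' ≤ θs + π/n) (hM : 0 < M) :
    (∃ x, θs < x ∧ x < b' ∧ psi γ c m n x < -M) ∨
    (∃ δ, 0 < δ ∧ θs + δ < b' ∧ ∀ x, θs < x → x ≤ θs + δ → M < psi γ c m n x) := by
  have hA : (0:ℝ) < |gg γ m θs| := abs_pos.2 hg
  obtain ⟨δ₁, hδ₁, hgb⟩ : ∃ δ₁ > 0, ∀ x, |x - θs| < δ₁ →
      |gg γ m x - gg γ m θs| < |gg γ m θs|/2 := by
    obtain ⟨δ₁, hδ₁, h⟩ := Metric.continuousAt_iff.1 (cont_gg γ m).continuousAt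
      (|gg γ m θs|/2) (by linarith)
    exact ⟨δ₁, hδ₁, fun x hx => by
      have := h (x := x) (by simpa [Real.dist_eq] using hx)
      simpa [Real.dist_eq] using this⟩
  obtain ⟨δ₂, hδ₂, hfb⟩ : ∃ δ₂ > 0, ∀ x, |x - θs| < δ₂ →
      |ff c n x| < |gg γ m θs|/(2*(M+1)) := by
    obtain ⟨δ₂, hδ₂, h⟩ := Metric.continuousAt_iff.1 (cont_ff c n).continuousAt
      (|gg γ m θs|/(2*(M+1))) (by positivity)
    refine ⟨δ₂, hδ₂, fun x hx => ?_⟩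
    have h2 := h (x := x) (by simpa [Real.dist_eq] using hx)
    rw [Real.dist_eq, hf, sub_zero] at h2
    exact h2
  set M0 := min (min δ₁ δ₂) (b' - θs) with hM0def
  have hM0 : 0 < M0 := lt_min (lt_min hδ₁ hδ₂) (by linarith)
  set δ := M0 / 2 with hδdef
  have hδpos : 0 < δ := by positivity
  have hδ1 : δ < δ₁ := by
    have h1 : M0 ≤ δ₁ := le_trans (min_le_left _ _) (min_le_left _ _)
    simp only [hδdef]; linarith
  have hδ2 : δ < δ₂ := by
    have h1 : M0 ≤ δ₂ := le_trans (min_le_left _ _) (min_le_right _ _)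
    simp only [hδdef]; linarith
  have hδb : δ < b' - θs := by
    have h1 : M0 ≤ b' - θs := min_le_right _ _
    simp only [hδdef]; linarith
  have hδpin : δ < π/n := by linarith
  have hrange : ∀ x, θs < x → x ≤ θs + δ →
      ff c n x ≠ 0 ∧ M < |psi γ c m n x| ∧ x < θs + π/n ∧
        |gg γ m x - gg γ m θs| < |gg γ m θs|/2 := by
    intro x h1 h2
    have haxpos : 0 < x - θs := by linarith
    have hax2 : |x - θs| < δ₂ := by rw [abs_of_pos haxpos]; linarith
    have hax1 : |x - θs| < δ₁ := by rw [abs_of_pos haxpos]; linarith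
    have hxpin : x < θs + π/n := by linarith
    have hffx : ff c n x ≠ 0 :=
      ff_isolated hn hf (ne_of_gt h1) (by rw [abs_of_pos haxpos]; linarith)
    have hggd := hgb x hax1
    have hggx : |gg γ m θs|/2 < |gg γ m x| := by
      have h4 : |gg γ m θs| - |gg γ m x| ≤ |gg γ m θs - gg γ m x| :=
        abs_sub_abs_le_abs_sub _ _
      rw [abs_sub_comm] at h4
      linarith
    have hffxb := hfb x hax2
    have hffpos : 0 < |ff c n x| := abs_pos.2 hffx
    have hstep2 : M * (|gg γ m θs|/(2*(M+1))) < |gg γ m θs|/2 := by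
      rw [mul_div_assoc'] at *
      rw [div_lt_div_iff₀ (by linarith) (by norm_num)]
      nlinarith
    have hmag : M < |psi γ c m n x| := by
      have h5 : M * |ff c n x| < |gg γ m x| := by
        have := mul_lt_mul_of_pos_left hffxb hM
        linarith
      have h6 : M < |gg γ m x| / |ff c n x| := (lt_div_iff₀ hffpos).2 h5
      rw [psi_eq_of_ne hffx, abs_div, abs_neg]
      exact h6
    exact ⟨hffx, hmag, hxpin, hggd⟩
  -- sign comparison between two points in range
  have hsign : ∀ x y, θs < x → x ≤ θs + δ → θs < y → y ≤ θs + δ →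
      0 < psi γ c m n x * psi γ c m n y := by
    intro x y hx1 hx2 hy1 hy2
    obtain ⟨hffx, _, hxpin, hggdx⟩ := hrange x hx1 hx2
    obtain ⟨hffy, _, hypin, hggdy⟩ := hrange y hy1 hy2
    have hggsign : 0 < gg γ m x * gg γ m y := by
      rw [abs_lt] at hggdx hggdy
      rcases lt_or_gt_of_ne hg with hneg | hpos
      · rw [abs_of_neg hneg] at hggdx hggdy
        nlinarith [hggdx.2, hggdy.2]
      · rw [abs_of_pos hpos] at hggdx hggdy
        nlinarith [hggdx.1, hggdy.1]
    have hffsign : 0 < ff c n x * ff c n y :=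
      ff_sign_const hn hf hx1 hxpin hy1 hypin
    rw [psi_eq_of_ne hffx, psi_eq_of_ne hffy, div_mul_div_comm, neg_mul_neg]
    exact div_pos hggsign hffsign
  set xb := θs + δ with hxbdef
  have hxb1 : θs < xb := by simp only [hxbdef]; linarith
  have hxb2 : xb ≤ θs + δ := le_refl _
  obtain ⟨hffxb', hmagxb, _, _⟩ := hrange xb hxb1 hxb2
  rcases lt_trichotomy (psi γ c m n xb) 0 with hneg | h0 | hpos
  · left
    refine ⟨xb, hxb1, by simp only [hxbdef]; linarith, ?_⟩
    rw [abs_of_neg hneg] at hmagxb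
    linarith
  · exfalso
    rw [h0] at hmagxb
    simp at hmagxb
    linarith
  · right
    refine ⟨δ, hδpos, by linarith, ?_⟩
    intro x hx1 hx2
    obtain ⟨_, hmagx, _, _⟩ := hrange x hx1 hx2
    have hprod := hsign x xb hx1 hx2 hxb1 hxb2
    have hpx : 0 < psi γ c m n x := by nlinarith
    rw [abs_of_pos hpx] at hmagx
    exact hmagx
end
end NZ
/-! ### Existence of the matched level point (left search) -/

namespace NZ
open Real Set Filter Topology
noncomputable section

variable {γ c m n : ℝ}

lemma contAt_of_tendsto_punctured {f : ℝ → ℝ} {a : ℝ}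
    (h : Tendsto f (𝓝[≠] a) (𝓝 (f a))) : ContinuousAt f a := by
  rw [ContinuousAt, ← nhdsNE_sup_pure a]
  exact h.sup (tendsto_pure_nhds f a)

lemma exL (hn : 0 < n) (hnm : n < m) {s₁ s₂ θ₂ : ℝ} (hs₁ : 0 < s₁) (hs₁₂ : s₁ < s₂)
    (hf2 : ff c n θ₂ ≠ 0) (hψ2 : psi γ c m n θ₂ = s₂) (ht : 0 ≤ dH γ c m n s₂ θ₂) :
    ∃ φ, φ ∈ Ioc (lw c n θ₂) θ₂ ∧ psi γ c m n φ = s₁ ∧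
      ∀ y ∈ Ioc (lw c n θ₂) θ₂, psi γ c m n y = s₁ → y ≤ φ := by
  have hs₂ : 0 < s₂ := lt_trans hs₁ hs₁₂
  set a := lw c n θ₂ with hadef
  have haθ : a < θ₂ := lw_lt hn hf2
  have hθuw : θ₂ < uw c n θ₂ := lt_uw hn θ₂
  have hfa : ff c n a = 0 := ff_lw hn θ₂
  have hwin : ∀ x, a < x → x ≤ θ₂ → ff c n x ≠ 0 := by
    intro x h1 h2
    exact ff_ne_on_window hn h1 (lt_of_le_of_lt h2 hθuw)
  have huwa : uw c n θ₂ = a + π/n := by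
    simp only [hadef, lw, uw]; field_simp; ring
  -- Step 1: nonemptiness of the level set
  have hEne : ∃ x ∈ Ioc a θ₂, psi γ c m n x = s₁ := by
    by_contra hE
    push_neg at hE
    have hgt : ∀ x ∈ Ioc a θ₂, s₁ < psi γ c m n x := by
      intro x hx
      have hcx : ContinuousOn (psi γ c m n) (Icc x θ₂) :=
        psi_contOn (fun t ht' => hwin t (lt_of_lt_of_le hx.1 ht'.1) ht'.2)
      have := gt_on_Icc_of_ne hcx (right_mem_Icc.2 hx.2) (hψ2 ▸ hs₁₂)
        (fun t ht' => hE t ⟨lt_of_lt_of_le hx.1 ht'.1, ht'.2⟩) x (left_mem_Icc.2 hx.2)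
      exact this
    -- helper: type contradiction when psi ≥ s₂ on (a, θ₂)
    have hTC : (∀ x, a < x → x < θ₂ → s₂ ≤ psi γ c m n x) → False := by
      intro hge
      have hδ : (0:ℝ) < (θ₂ - a)/2 := by linarith
      apply typeContra hn hnm hs₂ hf2 hψ2 ht hδ
      · intro x h1 h2
        exact hwin x (by linarith) (le_of_lt h2)
      · intro x h1 h2
        exact hge x (by linarith) h2
    rcases eq_or_ne (gg γ m a) 0 with hga | hga
    · -- common zero at the left endpoint
      set L := psi γ c m n a with hLdef
      rcases lt_or_ge L s₁ with hLlt | hLge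
      · -- limit below s₁ : points just right have psi < s₁
        have htd := cz_tendsto hn hfa hga
        have htd' : Tendsto (psi γ c m n) (𝓝[>] a) (𝓝 L) :=
          htd.mono_left (nhdsWithin_mono _ (fun x hx => ne_of_gt hx))
        have hev1 : ∀ᶠ x in 𝓝[>] a, psi γ c m n x < s₁ := htd'.eventually_lt_const hLlt
        have hev2 : ∀ᶠ x in 𝓝[>] a, x ∈ Ioo a θ₂ :=
          Ioo_mem_nhdsGT_of_mem ⟨le_refl _, haθ⟩
        obtain ⟨x, h1, h2⟩ := (hev1.and hev2).exists
        exact absurd (hgt x ⟨h2.1, le_of_lt h2.2⟩) (by linarith)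
      · -- L ≥ s₁ > 0 : strict local max at a
        have hL0 : 0 < L := lt_of_lt_of_le hs₁ hLge
        have hcz := cz_max hn hnm hfa hga hL0
        -- the point just right of a has psi < L
        set z := min (π/m) (θ₂ - a) / 2 with hzdef
        have hm : 0 < m := hn.trans hnm
        have hz0 : 0 < z := by
          apply div_pos (lt_min (by positivity) (by linarith)) (by norm_num)
        have hzπ : z < π/m := by
          have := min_le_left (π/m) (θ₂ - a)
          simp only [hzdef]
          have hπm : 0 < π/m := by positivity
          linarith [min_le_left (π/m) (θ₂ - a)]
        have hzθ : a + z ≤ θ₂ := by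
          have := min_le_right (π/m) (θ₂ - a)
          simp only [hzdef]
          linarith [min_le_right (π/m) (θ₂ - a)]
        obtain ⟨_, hltL⟩ := hcz z (ne_of_gt hz0) (by rw [abs_of_pos hz0]; exact hzπ)
        rcases eq_or_lt_of_le hLge with hLeq | hLgt
        · -- L = s₁ : contradiction with hgt directly
          exact absurd (hgt (a + z) ⟨by linarith, hzθ⟩) (by rw [← hLdef, ← hLeq] at hltL; linarith)
        · -- L > s₁ : minimum argument on [a, θ₂]
          have hcont : ContinuousOn (psi γ c m n) (Icc a θ₂) := by
            intro x hx
            rcases eq_or_lt_of_le hx.1 with heq | hlt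
            · have hca : ContinuousAt (psi γ c m n) a :=
                contAt_of_tendsto_punctured (cz_tendsto hn hfa hga)
              rw [← heq]
              exact hca.continuousWithinAt
            · exact (psi_contAt (hwin x hlt hx.2)).continuousWithinAt
          obtain ⟨ξ, hξmem, hξmin⟩ := isCompact_Icc.exists_isMinOn
            (nonempty_Icc.2 (le_of_lt haθ)) hcont
          rcases eq_or_lt_of_le hξmem.1 with hξa | hξa
          · -- minimum at a : contradicted by the strict local max
            have h1 : psi γ c m n ξ ≤ psi γ c m n (a + z) :=
              hξmin ⟨by linarith, hzθ⟩
            rw [← hξa] at h1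
            exact absurd h1 (by rw [← hLdef] at hltL ⊢; linarith)
          rcases eq_or_lt_of_le hξmem.2 with hξθ | hξθ
          · -- minimum at θ₂ : psi ≥ s₂ everywhere, type contradiction
            apply hTC
            intro x h1 h2
            have := hξmin ⟨le_of_lt h1, le_of_lt h2⟩
            rw [hξθ] at this
            rw [hψ2] at this
            exact this
          · -- interior minimum : noPosMin
            have hv : s₁ < psi γ c m n ξ := hgt ξ ⟨hξa, hξmem.2⟩
            set δ' := min ((ξ - a)/2) (θ₂ - ξ) with hδ'def
            have hδ'pos : 0 < δ' := lt_min (by linarith) (by linarith)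
            apply noPosMin hn hnm (lt_trans hs₁ hv) (hwin ξ hξa hξmem.2) rfl hδ'pos
            intro x hxd
            rw [abs_le] at hxd
            have hcov1 : ξ - δ' ≤ x := by linarith [hxd.1]
            have hcov2 : x ≤ ξ + δ' := by linarith [hxd.2]
            apply hξmin
            constructor
            · have := min_le_left ((ξ - a)/2) (θ₂ - ξ)
              simp only [hδ'def] at hcov1
              linarith [min_le_left ((ξ - a)/2) (θ₂ - ξ)]
            · have := min_le_right ((ξ - a)/2) (θ₂ - ξ)
              linarith [min_le_right ((ξ - a)/2) (θ₂ - ξ)]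
    · -- pole at the left endpoint
      have hpd := pole_dichotomy hn hfa hga haθ (by rw [← huwa]; exact le_of_lt hθuw) hs₂
      rcases hpd with ⟨x, h1, h2, h3⟩ | ⟨δ, hδ, hδb, hbig⟩
      · exact absurd (hgt x ⟨h1, le_of_lt h2⟩) (by linarith)
      · -- psi > s₂ on (a, a+δ]; minimum on [a+δ, θ₂]
        have hδθ : a + δ < θ₂ := hδb
        have hcont : ContinuousOn (psi γ c m n) (Icc (a+δ) θ₂) :=
          psi_contOn (fun t ht' => hwin t (by linarith [ht'.1]) ht'.2)
        obtain ⟨ξ, hξmem, hξmin⟩ := isCompact_Icc.exists_isMinOn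
          (nonempty_Icc.2 (le_of_lt hδθ)) hcont
        have hξs₂ : psi γ c m n ξ ≤ s₂ := by
          have h9 : psi γ c m n ξ ≤ psi γ c m n θ₂ := hξmin (right_mem_Icc.2 (le_of_lt hδθ))
          rw [hψ2] at h9
          exact h9
        rcases eq_or_lt_of_le hξmem.1 with hξad | hξad
        · -- minimum at a+δ : but psi (a+δ) > s₂
          have := hbig (a+δ) (by linarith) (le_refl _)
          rw [← hξad] at hξs₂
          linarith
        -- psi ≥ v on all of (a, θ₂] where v = psi ξ
        have hcover : ∀ x, a < x → x ≤ θ₂ → psi γ c m n ξ ≤ psi γ c m n x := by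
          intro x h1 h2
          rcases le_or_gt x (a+δ) with hle | hlt
          · have := hbig x h1 hle
            linarith
          · exact hξmin ⟨le_of_lt hlt, h2⟩
        rcases eq_or_lt_of_le hξmem.2 with hξθ | hξθ
        · -- minimum at θ₂ : type contradiction
          apply hTC
          intro x h1 h2
          have := hcover x h1 (le_of_lt h2)
          rw [hξθ, hψ2] at this
          exact this
        · -- interior minimum
          have hv : s₁ < psi γ c m n ξ := hgt ξ ⟨by linarith, hξmem.2⟩
          set δ' := min ((ξ - a)/2) (θ₂ - ξ) with hδ'def
          have hξa : a < ξ := by linarith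
          have hδ'pos : 0 < δ' := lt_min (by linarith) (by linarith)
          apply noPosMin hn hnm (lt_trans hs₁ hv) (hwin ξ hξa hξmem.2) rfl hδ'pos
          intro x hxd
          rw [abs_le] at hxd
          apply hcover
          · linarith [hxd.1, min_le_left ((ξ - a)/2) (θ₂ - ξ)]
          · linarith [hxd.2, min_le_right ((ξ - a)/2) (θ₂ - ξ)]
  -- Step 2: extract the greatest element
  obtain ⟨xb, hxbmem, hxbpsi⟩ := hEne
  have hcont2 : ContinuousOn (psi γ c m n) (Icc xb θ₂) :=
    psi_contOn (fun t ht' => hwin t (lt_of_lt_of_le hxbmem.1 ht'.1) ht'.2)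
  obtain ⟨φ, hφmem, hφub⟩ := exists_greatest_level hcont2
    ⟨xb, left_mem_Icc.2 hxbmem.2, hxbpsi⟩
  refine ⟨φ, ⟨lt_of_lt_of_le hxbmem.1 hφmem.1.1, hφmem.1.2⟩, hφmem.2, ?_⟩
  intro y hy hypsi
  rcases le_or_gt xb y with h | h
  · exact hφub ⟨⟨h, hy.2⟩, hypsi⟩
  · exact le_trans (le_of_lt h) hφmem.1.1

end
end NZ
/-! ### Reflection and the right search; injectivity lemmas -/

namespace NZ
open Real Set Filter Topology
noncomputable section

variable {γ c m n : ℝ}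

lemma ff_reflect (c n θ : ℝ) : ff (-c) n (-θ) = -(ff c n θ) := by
  rw [ff, ff, show n*(-θ)+(-c) = -(n*θ+c) by ring, Real.sin_neg]

lemma gg_reflect (γ m θ : ℝ) : gg γ m (-θ) = -(gg γ m θ) := by
  rw [gg, gg, show m*(-θ) = -(m*θ) by ring, Real.sin_neg]; ring

lemma ffd_reflect (c n θ : ℝ) : ffd (-c) n (-θ) = ffd c n θ := by
  rw [ffd, ffd, show n*(-θ)+(-c) = -(n*θ+c) by ring, Real.cos_neg]

lemma ggd_reflect (γ m θ : ℝ) : ggd γ m (-θ) = ggd γ m θ := by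
  rw [ggd, ggd, show m*(-θ) = -(m*θ) by ring, Real.cos_neg]

lemma psi_reflect (γ c m n θ : ℝ) : psi γ (-c) m n (-θ) = psi γ c m n θ := by
  by_cases hf : ff c n θ = 0
  · have hf' : ff (-c) n (-θ) = 0 := by rw [ff_reflect, hf, neg_zero]
    rw [psi, psi, if_pos hf', if_pos hf]
    rw [show m*(-θ) = -(m*θ) by ring, Real.cos_neg,
      show n*(-θ)+(-c) = -(n*θ+c) by ring, Real.cos_neg]
  · have hf' : ff (-c) n (-θ) ≠ 0 := by rw [ff_reflect]; simpa using hf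
    rw [psi, psi, if_neg hf', if_neg hf, ff_reflect, gg_reflect]
    rw [neg_neg, div_neg, neg_div]

lemma dH_reflect (γ c m n s θ : ℝ) : dH γ (-c) m n s (-θ) = -(dH γ c m n s θ) := by
  rw [dH, dH, tt, tt, ff_reflect, gg_reflect, ffd_reflect, ggd_reflect]
  ring

lemma lw_reflect (hn : 0 < n) {θ : ℝ} (hf : ff c n θ ≠ 0) :
    lw (-c) n (-θ) = -(uw c n θ) := by
  have hπ := Real.pi_pos
  set x := (n*θ+c)/π with hxdef
  set k := kk c n θ with hkdef
  have hk1 : (k:ℝ) ≤ x := Int.floor_le x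
  have hk2 : x < (k:ℝ) + 1 := Int.lt_floor_add_one x
  have hxk : x ≠ (k:ℝ) := by
    intro hcon
    apply hf
    rw [ff]
    have : n*θ+c = (k:ℝ)*π := by
      have := congrArg (fun t => t * π) hcon
      simp only [hxdef] at this
      field_simp at this
      linarith [this]
    rw [this]
    exact Real.sin_int_mul_pi k
  have hk1' : (k:ℝ) < x := lt_of_le_of_ne hk1 (Ne.symm hxk)
  have hfloor : kk (-c) n (-θ) = -k - 1 := by
    rw [kk]
    have harg : (n*(-θ) + -c)/π = -x := by
      simp only [hxdef]; field_simp; ring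
    rw [harg]
    apply Int.floor_eq_iff.2
    constructor
    · push_cast; linarith
    · push_cast; linarith
  rw [lw, hfloor, uw, ← hkdef]
  push_cast
  field_simp
  ring

lemma exR (hn : 0 < n) (hnm : n < m) {s₁ s₂ θ₂ : ℝ} (hs₁ : 0 < s₁) (hs₁₂ : s₁ < s₂)
    (hf2 : ff c n θ₂ ≠ 0) (hψ2 : psi γ c m n θ₂ = s₂) (ht : dH γ c m n s₂ θ₂ < 0) :
    ∃ φ, φ ∈ Ico θ₂ (uw c n θ₂) ∧ psi γ c m n φ = s₁ ∧
      ∀ y ∈ Ico θ₂ (uw c n θ₂), psi γ c m n y = s₁ → φ ≤ y := by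
  have hf2' : ff (-c) n (-θ₂) ≠ 0 := by rw [ff_reflect]; simpa using hf2
  have hψ2' : psi γ (-c) m n (-θ₂) = s₂ := by rw [psi_reflect]; exact hψ2
  have ht' : 0 ≤ dH γ (-c) m n s₂ (-θ₂) := by rw [dH_reflect]; linarith
  obtain ⟨φ', hφ'mem, hφ'psi, hφ'max⟩ := exL hn hnm hs₁ hs₁₂ hf2' hψ2' ht'
  rw [lw_reflect hn hf2] at hφ'mem
  refine ⟨-φ', ⟨?_, ?_⟩, ?_, ?_⟩
  · linarith [hφ'mem.2]
  · linarith [hφ'mem.1]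
  · have := psi_reflect γ c m n (-φ')
    rw [neg_neg] at this
    rw [← this]
    exact hφ'psi
  · intro y hy hypsi
    have hy' : -y ∈ Ioc (-(uw c n θ₂)) (-θ₂) := ⟨by linarith [hy.2], by linarith [hy.1]⟩
    have hypsi' : psi γ (-c) m n (-y) = s₁ := by rw [psi_reflect]; exact hypsi
    have := hφ'max (-y) (by rw [lw_reflect hn hf2]; exact hy') hypsi'
    linarith

/-- Two "left-type" collisions in the same window are impossible. -/
lemma inj_LL (hn : 0 < n) (hnm : n < m) {s₁ s₂ θ₂ θ₂' : ℝ} (hs₁ : 0 < s₁)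
    (hs₁₂ : s₁ < s₂) (hlt : θ₂ < θ₂')
    (hfz : ∀ x ∈ Icc θ₂ θ₂', ff c n x ≠ 0)
    (hψ : psi γ c m n θ₂ = s₂) (hψ' : psi γ c m n θ₂' = s₂)
    (ht' : 0 ≤ dH γ c m n s₂ θ₂')
    (hgt : ∀ x ∈ Icc θ₂ θ₂', s₁ < psi γ c m n x) : False := by
  have hs₂ : 0 < s₂ := lt_trans hs₁ hs₁₂
  have hcont : ContinuousOn (psi γ c m n) (Icc θ₂ θ₂') := psi_contOn hfz
  obtain ⟨ξ, hξmem, hξmin⟩ := isCompact_Icc.exists_isMinOn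
    (nonempty_Icc.2 (le_of_lt hlt)) hcont
  rcases lt_or_ge (psi γ c m n ξ) s₂ with hlo | hhi
  · -- interior minimum below s₂
    have hξne1 : θ₂ ≠ ξ := by
      intro hcon; rw [← hcon] at hlo; rw [hψ] at hlo; exact lt_irrefl _ hlo
    have hξne2 : ξ ≠ θ₂' := by
      intro hcon; rw [hcon] at hlo; rw [hψ'] at hlo; exact lt_irrefl _ hlo
    have hξin1 : θ₂ < ξ := lt_of_le_of_ne hξmem.1 hξne1
    have hξin2 : ξ < θ₂' := lt_of_le_of_ne hξmem.2 hξne2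
    have hv : s₁ < psi γ c m n ξ := hgt ξ hξmem
    set δ' := min (ξ - θ₂) (θ₂' - ξ) with hδ'def
    have hδ'pos : 0 < δ' := lt_min (by linarith) (by linarith)
    apply noPosMin hn hnm (lt_trans hs₁ hv) (hfz ξ hξmem) rfl hδ'pos
    intro x hxd
    rw [abs_le] at hxd
    apply hξmin
    constructor
    · linarith [hxd.1, min_le_left (ξ - θ₂) (θ₂' - ξ)]
    · linarith [hxd.2, min_le_right (ξ - θ₂) (θ₂' - ξ)]
  · -- psi ≥ s₂ on the whole interval : type contradiction at θ₂'
    have hge : ∀ x ∈ Icc θ₂ θ₂', s₂ ≤ psi γ c m n x := by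
      intro x hx
      have h9 : psi γ c m n ξ ≤ psi γ c m n x := hξmin hx
      linarith
    have hδ : (0:ℝ) < θ₂' - θ₂ := by linarith
    apply typeContra hn hnm hs₂ (hfz θ₂' (right_mem_Icc.2 (le_of_lt hlt))) hψ' ht' hδ
    · intro x h1 h2
      exact hfz x ⟨by linarith, le_of_lt h2⟩
    · intro x h1 h2
      exact hge x ⟨by linarith, le_of_lt h2⟩

/-- Two "right-type" collisions in the same window are impossible. -/
lemma inj_RR (hn : 0 < n) (hnm : n < m) {s₁ s₂ θ₂ θ₂' : ℝ} (hs₁ : 0 < s₁)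
    (hs₁₂ : s₁ < s₂) (hlt : θ₂ < θ₂')
    (hfz : ∀ x ∈ Icc θ₂ θ₂', ff c n x ≠ 0)
    (hψ : psi γ c m n θ₂ = s₂) (hψ' : psi γ c m n θ₂' = s₂)
    (ht : dH γ c m n s₂ θ₂ < 0)
    (hgt : ∀ x ∈ Icc θ₂ θ₂', s₁ < psi γ c m n x) : False := by
  apply inj_LL (γ := γ) (c := -c) hn hnm hs₁ hs₁₂ (neg_lt_neg hlt)
    (θ₂ := -θ₂') (θ₂' := -θ₂) ?_ ?_ ?_ ?_ ?_
  · intro x hx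
    have : ff c n (-x) ≠ 0 := hfz (-x) ⟨by linarith [hx.2], by linarith [hx.1]⟩
    rw [show x = -(-x) by ring, ff_reflect]
    simpa using this
  · rw [psi_reflect]; exact hψ'
  · rw [psi_reflect]; exact hψ
  · rw [dH_reflect]; linarith
  · intro x hx
    rw [show x = -(-x) by ring, psi_reflect]
    exact hgt (-x) ⟨by linarith [hx.2], by linarith [hx.1]⟩

end
end NZ
/-! ### Mixed collisions and finiteness -/

namespace NZ
open Real Set Filter Topology
noncomputable section

variable {γ c m n : ℝ}

/-- A left-image/right-image collision is impossible. -/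
lemma inj_LR (hn : 0 < n) (hnm : n < m) {s₁ s₂ θb θa φ : ℝ} (hs₁ : 0 < s₁)
    (hs₁₂ : s₁ < s₂)
    (hfz : ∀ x ∈ Icc θb θa, ff c n x ≠ 0)
    (hψb : psi γ c m n θb = s₂) (hψa : psi γ c m n θa = s₂)
    (hφ1 : θb < φ) (hφ2 : φ < θa) (hφψ : psi γ c m n φ = s₁)
    (hnoleft : ∀ y, φ < y → y ≤ θa → psi γ c m n y ≠ s₁)
    (hnoright : ∀ y, θb ≤ y → y < φ → psi γ c m n y ≠ s₁) : False := by
  have hba : θb < θa := lt_trans hφ1 hφ2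
  have hgtleft : ∀ x, θb ≤ x → x < φ → s₁ < psi γ c m n x := by
    intro x h1 h2
    have hcx : ContinuousOn (psi γ c m n) (Icc θb x) :=
      psi_contOn (fun t ht' => hfz t ⟨ht'.1, by linarith [ht'.2]⟩)
    exact gt_on_Icc_of_ne hcx (left_mem_Icc.2 h1) (hψb ▸ hs₁₂)
      (fun t ht' => hnoright t ht'.1 (by linarith [ht'.2]))
      x (right_mem_Icc.2 h1)
  have hgtright : ∀ x, φ < x → x ≤ θa → s₁ < psi γ c m n x := by
    intro x h1 h2
    have hcx : ContinuousOn (psi γ c m n) (Icc x θa) :=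
      psi_contOn (fun t ht' => hfz t ⟨by linarith [ht'.1], ht'.2⟩)
    exact gt_on_Icc_of_ne hcx (right_mem_Icc.2 h2) (hψa ▸ hs₁₂)
      (fun t ht' => hnoleft t (by linarith [ht'.1]) ht'.2)
      x (left_mem_Icc.2 h2)
  set δ' := min (φ - θb) (θa - φ) with hδ'def
  have hδ'pos : 0 < δ' := lt_min (by linarith) (by linarith)
  apply noPosMin hn hnm hs₁ (hfz φ ⟨le_of_lt hφ1, le_of_lt hφ2⟩) hφψ hδ'pos
  intro x hxd
  rw [abs_le] at hxd
  have hx1 : θb ≤ x := by linarith [hxd.1, min_le_left (φ - θb) (θa - φ)]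
  have hx2 : x ≤ θa := by linarith [hxd.2, min_le_right (φ - θb) (θa - φ)]
  rcases lt_trichotomy x φ with h | h | h
  · exact le_of_lt (hgtleft x hx1 h)
  · rw [h, hφψ]
  · exact le_of_lt (hgtright x h hx2)

lemma gg_eq_zero_iff (hγ : γ ≠ 0) (t : ℝ) : gg γ m t = 0 ↔ ff 0 m t = 0 := by
  rw [gg, ff, add_zero, mul_eq_zero]
  constructor
  · intro h'; rcases h' with h' | h'
    · exact absurd h' hγ
    · exact h'
  · intro h'; right; exact h'

/-- At most two level points within a single "grid gap". -/
lemma fiber_small (hn : 0 < n) (hnm : n < m) (hγ : γ ≠ 0) {s : ℝ} (hs : 0 < s)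
    {x y z : ℝ} (hxy : x < y) (hyz : y < z)
    (hkf : kk c n x = kk c n z) (hkg : kk 0 m x = kk 0 m z)
    (hfx : ff c n x ≠ 0) (hfz' : ff c n z ≠ 0)
    (hpx : psi γ c m n x = s) (hpy : psi γ c m n y = s) (hpz : psi γ c m n z = s) :
    False := by
  have hm : 0 < m := hn.trans hnm
  -- no zeros of ff on [x,z]
  have hffne : ∀ t ∈ Icc x z, ff c n t ≠ 0 := by
    intro t ht hcon
    have hkt1 : kk c n x ≤ kk c n t := kk_mono hn ht.1
    have hkt2 : kk c n t ≤ kk c n z := kk_mono hn ht.2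
    have hkt : kk c n t = kk c n x := by omega
    -- ff t = 0 means n t + c = kk t * π exactly
    have hlwt : lw c n t = t := lw_eq_self_of_ff_zero hn hcon
    have hlwx : lw c n x < x := lw_lt hn hfx
    rw [lw, hkt] at hlwt
    rw [lw] at hlwx
    have : t < x := by rw [← hlwt]; exact hlwx
    linarith [ht.1]
  -- no zeros of gg on [x,z]
  have hggne : ∀ t ∈ Icc x z, gg γ m t ≠ 0 := by
    intro t ht hcon
    rw [gg_eq_zero_iff hγ] at hcon
    have hgx : gg γ m x ≠ 0 := by
      intro hcon2
      rw [psi_eq_of_ne hfx, hcon2] at hpx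
      simp at hpx
      linarith
    have hgx' : ff 0 m x ≠ 0 := by
      intro hcon2; exact hgx ((gg_eq_zero_iff hγ x).2 hcon2)
    have hkt1 : kk 0 m x ≤ kk 0 m t := kk_mono hm ht.1
    have hkt2 : kk 0 m t ≤ kk 0 m z := kk_mono hm ht.2
    have hkt : kk 0 m t = kk 0 m x := by omega
    have hlwt : lw 0 m t = t := lw_eq_self_of_ff_zero hm hcon
    have hlwx : lw 0 m x < x := lw_lt hm hgx'
    rw [lw, hkt] at hlwt
    rw [lw] at hlwx
    have : t < x := by rw [← hlwt]; exact hlwx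
    linarith [ht.1]
  have hcont : ContinuousOn (psi γ c m n) (Icc x z) := psi_contOn hffne
  -- psi positive on [x,z]
  have hpos : ∀ t ∈ Icc x z, 0 < psi γ c m n t := by
    apply gt_on_Icc_of_ne hcont (left_mem_Icc.2 (by linarith)) (by rw [hpx]; exact hs)
    intro t ht hcon
    rw [psi_eq_of_ne (hffne t ht)] at hcon
    rw [div_eq_zero_iff] at hcon
    rcases hcon with h | h
    · exact hggne t ht (by linarith)
    · exact hffne t ht h
  -- minimum over [x,z]
  obtain ⟨ξ, hξmem, hξmin⟩ := isCompact_Icc.exists_isMinOn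
    (nonempty_Icc.2 (by linarith)) hcont
  rcases lt_or_ge (psi γ c m n ξ) s with hlo | hhi
  · have hξne1 : x ≠ ξ := fun hcon => by rw [← hcon, hpx] at hlo; exact lt_irrefl _ hlo
    have hξne2 : ξ ≠ z := fun hcon => by rw [hcon, hpz] at hlo; exact lt_irrefl _ hlo
    have hξ1 : x < ξ := lt_of_le_of_ne hξmem.1 hξne1
    have hξ2 : ξ < z := lt_of_le_of_ne hξmem.2 hξne2
    have hδpos : (0:ℝ) < min (ξ - x) (z - ξ) := lt_min (by linarith) (by linarith)
    apply noPosMin hn hnm (hpos ξ hξmem) (hffne ξ hξmem) rfl hδpos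
    intro t htd
    rw [abs_le] at htd
    apply hξmin
    constructor
    · linarith [htd.1, min_le_left (ξ - x) (z - ξ)]
    · linarith [htd.2, min_le_right (ξ - x) (z - ξ)]
  · -- psi ≥ s on [x,z]; y is an interior minimum at level s
    have hδpos : (0:ℝ) < min (y - x) (z - y) := lt_min (by linarith) (by linarith)
    apply noPosMin hn hnm hs (hffne y ⟨le_of_lt hxy, le_of_lt hyz⟩) hpy hδpos
    intro t htd
    rw [abs_le] at htd
    have ht : t ∈ Icc x z := by
      constructor
      · linarith [htd.1, min_le_left (y - x) (z - y)]
      · linarith [htd.2, min_le_right (y - x) (z - y)]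
    have h9 : psi γ c m n ξ ≤ psi γ c m n t := hξmin ht
    linarith

/-- The zero set of `tt s` in a compact interval is finite. -/
lemma zero_set_finite (hn : 0 < n) (hnm : n < m) (hγ : γ ≠ 0) {s A B : ℝ} (hs : 0 < s) :
    {θ ∈ Icc A B | tt γ c m n s θ = 0}.Finite := by
  have hm : 0 < m := hn.trans hnm
  have hsplit : {θ ∈ Icc A B | tt γ c m n s θ = 0} ⊆
      {θ ∈ Icc A B | ff c n θ = 0} ∪
      {θ ∈ Icc A B | ff c n θ ≠ 0 ∧ psi γ c m n θ = s} := by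
    intro θ hθ
    rcases eq_or_ne (ff c n θ) 0 with h | h
    · left; exact ⟨hθ.1, h⟩
    · right; exact ⟨hθ.1, h, (tt_zero_iff h).1 hθ.2⟩
  apply Set.Finite.subset ?_ hsplit
  apply Set.Finite.union
  · -- zeros of ff are rigid
    apply Set.Finite.of_finite_image (f := kk c n)
    · apply Set.Finite.subset (Set.finite_Icc (kk c n A) (kk c n B))
      rintro k ⟨θ, hθ, rfl⟩
      exact ⟨kk_mono hn hθ.1.1, kk_mono hn hθ.1.2⟩
    · intro θ hθ θ' hθ' hkk
      have h1 : lw c n θ = θ := lw_eq_self_of_ff_zero hn hθ.2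
      have h2 : lw c n θ' = θ' := lw_eq_self_of_ff_zero hn hθ'.2
      rw [← h1, ← h2, lw, lw, hkk]
  · -- level points : at most two per grid gap
    have hcover : {θ ∈ Icc A B | ff c n θ ≠ 0 ∧ psi γ c m n θ = s} ⊆
        ⋃ p ∈ (Icc (kk c n A) (kk c n B) ×ˢ Icc (kk 0 m A) (kk 0 m B) : Set (ℤ × ℤ)),
          {θ ∈ Icc A B | ff c n θ ≠ 0 ∧ psi γ c m n θ = s ∧
            kk c n θ = p.1 ∧ kk 0 m θ = p.2} := by
      intro θ hθ
      exact Set.mem_biUnion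
        (⟨⟨kk_mono hn hθ.1.1, kk_mono hn hθ.1.2⟩,
          ⟨kk_mono hm hθ.1.1, kk_mono hm hθ.1.2⟩⟩ :
            (kk c n θ, kk 0 m θ) ∈ (Icc (kk c n A) (kk c n B) ×ˢ Icc (kk 0 m A) (kk 0 m B) : Set (ℤ × ℤ)))
        ⟨hθ.1, hθ.2.1, hθ.2.2, rfl, rfl⟩
    apply Set.Finite.subset ?_ hcover
    apply Set.Finite.biUnion ((Set.finite_Icc _ _).prod (Set.finite_Icc _ _))
    intro p _
    by_contra hinf
    obtain ⟨x, y, z, hx, hy, hz, hxy, hyz⟩ := exists_sorted3 hinf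
    simp only [Set.mem_setOf_eq] at hx hy hz
    exact fiber_small hn hnm hγ hs hxy hyz
      (hx.2.2.2.1.trans hz.2.2.2.1.symm) (hx.2.2.2.2.trans hz.2.2.2.2.symm)
      hx.2.1 hz.2.1 hx.2.2.1 hy.2.2.1 hz.2.2.1

end
end NZ
/-! ### Periodicity, the injection map, and the main counting lemma -/

namespace NZ
open Real Set Filter Topology
noncomputable section

variable {γ c m n : ℝ}

lemma ff_shift {b : ℤ} (hb : (b:ℝ) = 2*n) (θ : ℝ) :
    ff c n (θ - 2*π) = (-1:ℝ)^(-b) * ff c n θ := by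
  rw [ff, ff, show n*(θ - 2*π)+c = (n*θ+c) + ((-b : ℤ):ℝ)*π by push_cast; linear_combination π * hb,
    Real.sin_add_int_mul_pi]

lemma gg_shift {a : ℤ} (ha : (a:ℝ) = 2*m) (θ : ℝ) :
    gg γ m (θ - 2*π) = (-1:ℝ)^(-a) * gg γ m θ := by
  rw [gg, gg, show m*(θ - 2*π) = (m*θ) + ((-a : ℤ):ℝ)*π by push_cast; linear_combination π * ha,
    Real.sin_add_int_mul_pi]
  ring

lemma tt_shift_zero_iff {a b d : ℤ} (hb : (b:ℝ) = 2*n) (ha : (a:ℝ) = 2*m)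
    (hd : a = b + 2*d) (s θ : ℝ) :
    tt γ c m n s (θ - 2*π) = 0 ↔ tt γ c m n s θ = 0 := by
  have hsign : ((-1:ℝ))^(-a) = ((-1:ℝ))^(-b) := by
    rw [show -a = -b + 2*(-d) by omega, zpow_add₀ (by norm_num : (-1:ℝ) ≠ 0), zpow_mul]
    norm_num
  have heq : tt γ c m n s (θ - 2*π) = (-1:ℝ)^(-b) * tt γ c m n s θ := by
    rw [tt, tt, ff_shift hb, gg_shift ha, hsign]
    ring
  rw [heq]
  constructor
  · intro h
    rcases mul_eq_zero.1 h with h' | h'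
    · exact absurd h' (zpow_ne_zero _ (by norm_num))
    · exact h'
  · intro h; rw [h, mul_zero]

/-- Spec for the left search. -/
def SpecL (γ c m n s₁ : ℝ) (θ φ : ℝ) : Prop :=
  φ ∈ Ioc (lw c n θ) θ ∧ psi γ c m n φ = s₁ ∧
    ∀ y ∈ Ioc (lw c n θ) θ, psi γ c m n y = s₁ → y ≤ φ

/-- Spec for the right search. -/
def SpecR (γ c m n s₁ : ℝ) (θ φ : ℝ) : Prop :=
  φ ∈ Ico θ (uw c n θ) ∧ psi γ c m n φ = s₁ ∧
    ∀ y ∈ Ico θ (uw c n θ), psi γ c m n y = s₁ → φ ≤ y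

open scoped Classical in
/-- The injection. -/
def Phi (γ c m n s₁ s₂ : ℝ) (θ : ℝ) : ℝ :=
  if ff c n θ = 0 then θ
  else if 0 ≤ dH γ c m n s₂ θ then
    (if h : ∃ φ, SpecL γ c m n s₁ θ φ then h.choose else θ)
  else
    (if h : ∃ φ, SpecR γ c m n s₁ θ φ then h.choose else θ)

lemma Phi_cz {s₁ s₂ θ : ℝ} (h : ff c n θ = 0) : Phi γ c m n s₁ s₂ θ = θ := by
  rw [Phi, if_pos h]

lemma Phi_L (hn : 0 < n) (hnm : n < m) {s₁ s₂ θ : ℝ} (hs₁ : 0 < s₁) (hlt : s₁ < s₂)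
    (hf : ff c n θ ≠ 0) (hψ : psi γ c m n θ = s₂) (ht : 0 ≤ dH γ c m n s₂ θ) :
    SpecL γ c m n s₁ θ (Phi γ c m n s₁ s₂ θ) := by
  have hex : ∃ φ, SpecL γ c m n s₁ θ φ := by
    obtain ⟨φ, h1, h2, h3⟩ := exL hn hnm hs₁ hlt hf hψ ht
    exact ⟨φ, h1, h2, h3⟩
  rw [Phi, if_neg hf, if_pos ht, dif_pos hex]
  exact hex.choose_spec

lemma Phi_R (hn : 0 < n) (hnm : n < m) {s₁ s₂ θ : ℝ} (hs₁ : 0 < s₁) (hlt : s₁ < s₂)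
    (hf : ff c n θ ≠ 0) (hψ : psi γ c m n θ = s₂) (ht : dH γ c m n s₂ θ < 0) :
    SpecR γ c m n s₁ θ (Phi γ c m n s₁ s₂ θ) := by
  have hex : ∃ φ, SpecR γ c m n s₁ θ φ := by
    obtain ⟨φ, h1, h2, h3⟩ := exR hn hnm hs₁ hlt hf hψ ht
    exact ⟨φ, h1, h2, h3⟩
  rw [Phi, if_neg hf, if_neg (not_le.2 ht), dif_pos hex]
  exact hex.choose_spec

lemma Phi_good (hn : 0 < n) (hnm : n < m) {s₁ s₂ θ : ℝ} (hs₁ : 0 < s₁) (hlt : s₁ < s₂)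
    (hf : ff c n θ ≠ 0) (hψ : psi γ c m n θ = s₂) :
    ff c n (Phi γ c m n s₁ s₂ θ) ≠ 0 ∧ psi γ c m n (Phi γ c m n s₁ s₂ θ) = s₁ ∧
      lw c n θ < Phi γ c m n s₁ s₂ θ ∧ Phi γ c m n s₁ s₂ θ < uw c n θ := by
  rcases le_or_gt 0 (dH γ c m n s₂ θ) with ht | ht
  · obtain ⟨h1, h2, _⟩ := Phi_L hn hnm hs₁ hlt hf hψ ht
    have hu : Phi γ c m n s₁ s₂ θ < uw c n θ := lt_of_le_of_lt h1.2 (lt_uw hn θ)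
    exact ⟨ff_ne_on_window hn h1.1 hu, h2, h1.1, hu⟩
  · obtain ⟨h1, h2, _⟩ := Phi_R hn hnm hs₁ hlt hf hψ ht
    have hl : lw c n θ < Phi γ c m n s₁ s₂ θ := lt_of_lt_of_le (lw_lt hn hf) h1.1
    exact ⟨ff_ne_on_window hn hl h1.2, h2, hl, h1.2⟩

end
end NZ
/-! ### The main counting lemma -/

namespace NZ
open Real Set Filter Topology
noncomputable section

variable {γ c m n : ℝ}

lemma main_count (hn : 0 < n) (hnm : n < m) (hγ : γ ≠ 0)
    {a b d : ℤ} (hb : (b:ℝ) = 2*n) (ha : (a:ℝ) = 2*m) (hd : a = b + 2*d)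
    {s₁ s₂ : ℝ} (hs₁ : 0 < s₁) (hs₁₂ : s₁ ≤ s₂) :
    {θ ∈ Ico 0 (2*π) | tt γ c m n s₂ θ = 0}.ncard ≤
      {θ ∈ Ico 0 (2*π) | tt γ c m n s₁ θ = 0}.ncard := by
  rcases eq_or_lt_of_le hs₁₂ with heq | hlt
  · rw [heq]
  have hs₂ : 0 < s₂ := lt_trans hs₁ hlt
  have hπ := Real.pi_pos
  set x₀ := lw c n 0 with hx₀def
  have hx₀le : x₀ ≤ 0 := lw_le hn 0
  have hx₀gt : -(2*π) < x₀ := by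
    have hb1 : 1 ≤ b := by
      have h1 : (0:ℝ) < (b:ℝ) := by rw [hb]; linarith
      exact_mod_cast h1
    have hnhalf : (1:ℝ)/2 ≤ n := by
      have h1 : (1:ℝ) ≤ (b:ℝ) := by exact_mod_cast hb1
      rw [hb] at h1; linarith
    have h3 : c/π - 1 < ((kk c n 0 : ℤ):ℝ) := by
      have h0 := Int.sub_one_lt_floor ((n*0+c)/π)
      simpa [kk] using h0
    simp only [hx₀def, lw]
    rw [lt_div_iff₀ hn]
    have h4 := mul_lt_mul_of_pos_right h3 hπ
    rw [sub_mul, div_mul_cancel₀ _ (ne_of_gt hπ), one_mul] at h4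
    nlinarith
  have hx₀2π : 0 < x₀ + 2*π := by linarith
  have hffx₀ : ff c n x₀ = 0 := ff_lw hn 0
  have hffx₀2π : ff c n (x₀ + 2*π) = 0 := by
    have hsh := ff_shift (c := c) hb (x₀ + 2*π)
    rw [show x₀ + 2*π - 2*π = x₀ by ring, hffx₀] at hsh
    rcases mul_eq_zero.1 hsh.symm with h' | h'
    · exact absurd h' (zpow_ne_zero _ (by norm_num))
    · exact h'
  -- the two zero sets and the one-period zero sets
  set Z : ℝ → Set ℝ := fun s => {θ ∈ Ico 0 (2*π) | tt γ c m n s θ = 0} with hZdef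
  set Z' : ℝ → Set ℝ := fun s => {θ ∈ Ico x₀ (x₀ + 2*π) | tt γ c m n s θ = 0} with hZ'def
  have hZfin : ∀ s, 0 < s → (Z s).Finite := fun s hs =>
    (zero_set_finite hn hnm hγ (A := 0) (B := 2*π) hs).subset
      (fun θ hθ => ⟨⟨hθ.1.1, le_of_lt hθ.1.2⟩, hθ.2⟩)
  have hZ'fin : ∀ s, 0 < s → (Z' s).Finite := fun s hs =>
    (zero_set_finite hn hnm hγ (A := x₀) (B := x₀ + 2*π) hs).subset
      (fun θ hθ => ⟨⟨hθ.1.1, le_of_lt hθ.1.2⟩, hθ.2⟩)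
  -- Step A : Z s₂ injects into Z' s₂
  have hstepA : (Z s₂).ncard ≤ (Z' s₂).ncard := by
    refine Set.ncard_le_ncard_of_injOn (fun θ => if θ < x₀ + 2*π then θ else θ - 2*π) ?_ ?_ (hZ'fin s₂ hs₂)
    · intro θ hθ
      by_cases hcase : θ < x₀ + 2*π
      · simp only [if_pos hcase]
        exact ⟨⟨le_trans hx₀le hθ.1.1, hcase⟩, hθ.2⟩
      · push_neg at hcase
        simp only [if_neg (not_lt.2 hcase)]
        refine ⟨⟨by linarith, by linarith [hθ.1.2]⟩, ?_⟩
        exact (tt_shift_zero_iff hb ha hd s₂ θ).2 hθ.2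
    · intro θ hθ θ' hθ' heq
      by_cases h1 : θ < x₀ + 2*π <;> by_cases h2 : θ' < x₀ + 2*π
      · simpa [if_pos h1, if_pos h2] using heq
      · push_neg at h2
        simp only [if_pos h1, if_neg (not_lt.2 h2)] at heq
        exfalso
        have hb1 : 0 ≤ θ := hθ.1.1
        have hb2 : θ' < 2*π := hθ'.1.2
        linarith
      · push_neg at h1
        simp only [if_neg (not_lt.2 h1), if_pos h2] at heq
        exfalso
        have hb1 : 0 ≤ θ' := hθ'.1.1
        have hb2 : θ < 2*π := hθ.1.2
        linarith
      · push_neg at h1 h2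
        simp only [if_neg (not_lt.2 h1), if_neg (not_lt.2 h2)] at heq
        linarith
  -- Step C : Z' s₁ injects into Z s₁
  have hstepC : (Z' s₁).ncard ≤ (Z s₁).ncard := by
    refine Set.ncard_le_ncard_of_injOn (fun θ => if 0 ≤ θ then θ else θ + 2*π) ?_ ?_ (hZfin s₁ hs₁)
    · intro θ hθ
      by_cases hcase : 0 ≤ θ
      · simp only [if_pos hcase]
        exact ⟨⟨hcase, by linarith [hθ.1.2]⟩, hθ.2⟩
      · push_neg at hcase
        simp only [if_neg (not_le.2 hcase)]
        refine ⟨⟨by linarith [hθ.1.1], by linarith⟩, ?_⟩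
        have := (tt_shift_zero_iff (γ := γ) (c := c) hb ha hd s₁ (θ + 2*π))
        rw [show θ + 2*π - 2*π = θ by ring] at this
        exact this.1 hθ.2
    · intro θ hθ θ' hθ' heq
      by_cases h1 : 0 ≤ θ <;> by_cases h2 : 0 ≤ θ'
      · simpa [if_pos h1, if_pos h2] using heq
      · push_neg at h2
        simp only [if_pos h1, if_neg (not_le.2 h2)] at heq
        exfalso
        have hb2 : θ < x₀ + 2*π := hθ.1.2
        have hb3 : x₀ ≤ θ' := hθ'.1.1
        linarith
      · push_neg at h1
        simp only [if_neg (not_le.2 h1), if_pos h2] at heq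
        exfalso
        have hb2 : θ' < x₀ + 2*π := hθ'.1.2
        have hb3 : x₀ ≤ θ := hθ.1.1
        linarith
      · push_neg at h1 h2
        simp only [if_neg (not_le.2 h1), if_neg (not_le.2 h2)] at heq
        linarith
  -- Step B : the main injection Phi : Z' s₂ → Z' s₁
  have hstepB : (Z' s₂).ncard ≤ (Z' s₁).ncard := by
    -- window bounds for points of Z' s₂
    have hwinbound : ∀ θ, x₀ ≤ θ → θ < x₀ + 2*π → ff c n θ ≠ 0 →
        x₀ ≤ lw c n θ ∧ uw c n θ ≤ x₀ + 2*π := by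
      intro θ h1 h2 hf
      constructor
      · by_contra hcon
        push_neg at hcon
        exact ff_ne_on_window hn hcon (lt_of_le_of_lt h1 (lt_uw hn θ)) hffx₀
      · by_contra hcon
        push_neg at hcon
        exact ff_ne_on_window hn (lt_of_le_of_lt (lw_le hn θ) h2) hcon hffx₀2π
    refine Set.ncard_le_ncard_of_injOn (Phi γ c m n s₁ s₂) ?_ ?_ (hZ'fin s₁ hs₁)
    · -- maps to
      intro θ hθ
      by_cases hf : ff c n θ = 0
      · rw [Phi_cz hf]
        have hgg : gg γ m θ = 0 := by
          have := hθ.2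
          rw [tt, hf, mul_zero, zero_add] at this
          exact this
        exact ⟨hθ.1, by rw [tt, hf, hgg]; ring⟩
      · have hψ : psi γ c m n θ = s₂ := (tt_zero_iff hf).1 hθ.2
        obtain ⟨hg1, hg2, hg3, hg4⟩ := Phi_good hn hnm hs₁ hlt hf hψ
        obtain ⟨hw1, hw2⟩ := hwinbound θ hθ.1.1 hθ.1.2 hf
        refine ⟨⟨by linarith, by linarith⟩, (tt_zero_iff hg1).2 hg2⟩
    · -- injectivity
      have hcore : ∀ θ ∈ Z' s₂, ∀ θ' ∈ Z' s₂, θ < θ' →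
          Phi γ c m n s₁ s₂ θ = Phi γ c m n s₁ s₂ θ' → False := by
        intro θ hθ θ' hθ' hlt2 heq
        by_cases hf : ff c n θ = 0 <;> by_cases hf' : ff c n θ' = 0
        · rw [Phi_cz hf, Phi_cz hf'] at heq; linarith
        · have hψ' : psi γ c m n θ' = s₂ := (tt_zero_iff hf').1 hθ'.2
          obtain ⟨hg1, _, _, _⟩ := Phi_good hn hnm hs₁ hlt hf' hψ'
          rw [Phi_cz hf] at heq
          exact hg1 (heq ▸ hf)
        · have hψ : psi γ c m n θ = s₂ := (tt_zero_iff hf).1 hθ.2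
          obtain ⟨hg1, _, _, _⟩ := Phi_good hn hnm hs₁ hlt hf hψ
          rw [Phi_cz hf'] at heq
          exact hg1 (heq.symm ▸ hf')
        · -- both regular
          have hψ : psi γ c m n θ = s₂ := (tt_zero_iff hf).1 hθ.2
          have hψ' : psi γ c m n θ' = s₂ := (tt_zero_iff hf').1 hθ'.2
          set φ := Phi γ c m n s₁ s₂ θ with hφdef
          have hkk_of : (lw c n θ < φ ∧ φ < uw c n θ') → kk c n θ = kk c n θ' := by
            rintro ⟨hq1, hq2⟩
            by_contra hne
            have hklt : kk c n θ < kk c n θ' :=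
              lt_of_le_of_ne (kk_mono hn (le_of_lt hlt2)) hne
            have hwle := window_le (c := c) hn hklt
            obtain ⟨hg1, hg2, hg3, hg4⟩ := Phi_good hn hnm hs₁ hlt hf hψ
            obtain ⟨hg1', hg2', hg3', hg4'⟩ := Phi_good hn hnm hs₁ hlt hf' hψ'
            rw [← hφdef] at hg3 hg4
            rw [← heq] at hg3' hg4'
            linarith
          have hsame : kk c n θ = kk c n θ' := by
            apply hkk_of
            obtain ⟨hg1, hg2, hg3, hg4⟩ := Phi_good hn hnm hs₁ hlt hf hψ
            obtain ⟨hg1', hg2', hg3', hg4'⟩ := Phi_good hn hnm hs₁ hlt hf' hψ'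
            rw [← hφdef] at hg3 hg4
            rw [← heq] at hg3' hg4'
            exact ⟨hg3, hg4'⟩
          have hlweq : lw c n θ = lw c n θ' := by rw [lw, lw, hsame]
          have huweq : uw c n θ = uw c n θ' := by rw [uw, uw, hsame]
          have hfzIcc : ∀ x ∈ Icc θ θ', ff c n x ≠ 0 := by
            intro x hx
            apply ff_ne_on_window hn (lt_of_lt_of_le (lw_lt hn hf) hx.1)
            rw [huweq]
            exact lt_of_le_of_lt hx.2 (lt_uw hn θ')
          have hψφ : psi γ c m n φ = s₁ := by
            obtain ⟨_, hg2, _, _⟩ := Phi_good hn hnm hs₁ hlt hf hψ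
            rw [← hφdef] at hg2; exact hg2
          have hφθne : φ ≠ θ := by
            intro hcon
            rw [hcon, hψ] at hψφ; linarith
          have hφθ'ne : φ ≠ θ' := by
            intro hcon
            rw [hcon, hψ'] at hψφ; linarith
          rcases le_or_gt 0 (dH γ c m n s₂ θ) with hT | hT <;>
            rcases le_or_gt 0 (dH γ c m n s₂ θ') with hT' | hT'
          · -- LL
            obtain ⟨hm1, _, hmax⟩ := Phi_L hn hnm hs₁ hlt hf hψ hT
            obtain ⟨hm1', _, hmax'⟩ := Phi_L hn hnm hs₁ hlt hf' hψ' hT'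
            rw [← hφdef] at hm1 hmax
            rw [← heq] at hm1' hmax'
            apply inj_LL hn hnm hs₁ hlt hlt2 hfzIcc hψ hψ' hT'
            have hcont : ContinuousOn (psi γ c m n) (Icc θ θ') := psi_contOn hfzIcc
            apply gt_on_Icc_of_ne hcont (left_mem_Icc.2 (le_of_lt hlt2)) (hψ ▸ hlt)
            intro x hx hcon
            have hxle : x ≤ φ := hmax' x ⟨by rw [← hlweq]; linarith [lw_lt hn hf, hx.1], hx.2⟩ hcon
            have : x = θ := le_antisymm (le_trans hxle hm1.2) hx.1
            rw [this, hψ] at hcon; linarith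
          · -- L at θ, R at θ' : φ ≤ θ < θ' ≤ φ
            obtain ⟨hm1, _, _⟩ := Phi_L hn hnm hs₁ hlt hf hψ hT
            obtain ⟨hm1', _, _⟩ := Phi_R hn hnm hs₁ hlt hf' hψ' hT'
            rw [← hφdef] at hm1
            rw [← heq] at hm1'
            linarith [hm1.2, hm1'.1]
          · -- R at θ, L at θ' : the mixed case
            obtain ⟨hm1, _, hmin⟩ := Phi_R hn hnm hs₁ hlt hf hψ hT
            obtain ⟨hm1', _, hmax'⟩ := Phi_L hn hnm hs₁ hlt hf' hψ' hT'
            rw [← hφdef] at hm1 hmin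
            rw [← heq] at hm1' hmax'
            have hφ1 : θ < φ := lt_of_le_of_ne hm1.1 (Ne.symm hφθne)
            have hφ2 : φ < θ' := lt_of_le_of_ne hm1'.2 hφθ'ne
            apply inj_LR hn hnm hs₁ hlt hfzIcc hψ hψ' hφ1 hφ2 hψφ
            · intro y h1 h2 hcon
              have := hmax' y ⟨by rw [← hlweq]; linarith [lw_lt hn hf], h2⟩ hcon
              linarith
            · intro y h1 h2 hcon
              have := hmin y ⟨h1, lt_trans h2 hm1.2⟩ hcon
              linarith
          · -- RR
            obtain ⟨hm1, _, hmin⟩ := Phi_R hn hnm hs₁ hlt hf hψ hT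
            obtain ⟨hm1', _, hmin'⟩ := Phi_R hn hnm hs₁ hlt hf' hψ' hT'
            rw [← hφdef] at hm1 hmin
            rw [← heq] at hm1'
            apply inj_RR hn hnm hs₁ hlt hlt2 hfzIcc hψ hψ' hT
            have hcont : ContinuousOn (psi γ c m n) (Icc θ θ') := psi_contOn hfzIcc
            apply gt_on_Icc_of_ne hcont (left_mem_Icc.2 (le_of_lt hlt2)) (hψ ▸ hlt)
            intro x hx hcon
            have hxge : φ ≤ x := hmin x ⟨hx.1, by
              rw [huweq]
              exact lt_of_le_of_lt hx.2 (lt_uw hn θ')⟩ hcon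
            have : x = θ' := le_antisymm hx.2 (le_trans hm1'.1 hxge)
            rw [this, hψ'] at hcon; linarith
      intro θ hθ θ' hθ' heq
      rcases lt_trichotomy θ θ' with h | h | h
      · exact absurd heq (fun hc => hcore θ hθ θ' hθ' h hc)
      · exact h
      · exact absurd heq (fun hc => hcore θ' hθ' θ hθ h hc.symm)
  calc (Z s₂).ncard ≤ (Z' s₂).ncard := hstepA
    _ ≤ (Z' s₁).ncard := hstepB
    _ ≤ (Z s₁).ncard := hstepC

end
end NZ

open Real Set

/-- Lemma 4.1: for `p > q`, the number of solutions of `T(θ, s) = 0`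
in `[0, 2π)` is monotone decreasing in `s ∈ (0, ∞)`. -/
theorem number_of_zeros_monotone_decreasing
    (p q : ℕ) (hq : 2 ≤ q) (hpq : q < p)
    (r : ℕ) (hr : r = Nat.gcd (p - 1) (q - 1))
    (m n : ℝ)
    (hm : m = ((p : ℝ) - 1) * ((q : ℝ) + 1) / (2 * r))
    (hn : n = ((p : ℝ) + 1) * ((q : ℝ) - 1) / (2 * r))
    (A B : ℝ)
    (hA : A = 1 / (p : ℝ) ^ ((1 : ℝ) / ((p : ℝ) - 1)))
    (hB : B = 1 / (q : ℝ) ^ ((1 : ℝ) / ((q : ℝ) - 1)))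
    (C₀ : ℝ) (hC₀ : C₀ = ((p : ℝ) - 1) * B / (((q : ℝ) - 1) * A))
    (c : ℝ) (ε : ℝ) (hε : ε = 1 ∨ ε = -1)
    (T : ℝ → ℝ → ℝ)
    (hT : ∀ θ s : ℝ, T θ s = ε * s * Real.sin (n * θ + c) + C₀ * Real.sin (m * θ)) :
    ∀ s₁ s₂ : ℝ, 0 < s₁ → s₁ ≤ s₂ →
      ({θ ∈ Set.Ico (0 : ℝ) (2 * Real.pi) | T θ s₂ = 0}).ncard
        ≤ ({θ ∈ Set.Ico (0 : ℝ) (2 * Real.pi) | T θ s₁ = 0}).ncard := by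
  intro s₁ s₂ hs₁ hs₁₂
  -- basic arithmetic facts
  have hp3 : 3 ≤ p := by omega
  have hrpos : 0 < r := by
    rw [hr]; exact Nat.gcd_pos_of_pos_right _ (by omega)
  have hrR : ((r:ℕ) : ℝ) ≠ 0 := by
    simp only [ne_eq, Nat.cast_eq_zero]; omega
  have hrRpos : (0:ℝ) < (r : ℝ) := by exact_mod_cast hrpos
  have hrdvd1 : r ∣ p - 1 := hr ▸ Nat.gcd_dvd_left _ _
  have hrdvd2 : r ∣ q - 1 := hr ▸ Nat.gcd_dvd_right _ _
  have hrdvd3 : r ∣ p - q := by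
    have h9 : p - q = (p - 1) - (q - 1) := by omega
    rw [h9]; exact Nat.dvd_sub hrdvd1 hrdvd2
  have hq1R : ((q - 1 : ℕ) : ℝ) = (q:ℝ) - 1 := by
    push_cast [Nat.cast_sub (by omega : 1 ≤ q)]; ring
  have hp1R : ((p - 1 : ℕ) : ℝ) = (p:ℝ) - 1 := by
    push_cast [Nat.cast_sub (by omega : 1 ≤ p)]; ring
  have hpqR : ((p - q : ℕ) : ℝ) = (p:ℝ) - q := by
    push_cast [Nat.cast_sub (by omega : q ≤ p)]; ring
  -- the integer data
  set bN : ℕ := (p + 1) * ((q - 1) / r) with hbNdef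
  set aN : ℕ := ((p - 1) / r) * (q + 1) with haNdef
  set dN : ℕ := (p - q) / r with hdNdef
  have hbcast : ((bN : ℕ) : ℝ) = 2 * n := by
    have h1 : (((q - 1) / r : ℕ) : ℝ) = ((q:ℝ) - 1)/r := by
      rw [Nat.cast_div hrdvd2 hrR, hq1R]
    rw [hbNdef]
    push_cast [h1]
    rw [hn]
    field_simp
  have hacast : ((aN : ℕ) : ℝ) = 2 * m := by
    have h1 : (((p - 1) / r : ℕ) : ℝ) = ((p:ℝ) - 1)/r := by
      rw [Nat.cast_div hrdvd1 hrR, hp1R]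
    rw [haNdef]
    push_cast [h1]
    rw [hm]
    field_simp
  have hdcast : ((dN : ℕ) : ℝ) = m - n := by
    have h1 : (((p - q) / r : ℕ) : ℝ) = ((p:ℝ) - q)/r := by
      rw [Nat.cast_div hrdvd3 hrR, hpqR]
    rw [hdNdef, h1, hm, hn]
    field_simp
    ring
  have hbN1 : 1 ≤ bN := by
    have h1 : 0 < (q - 1) / r := Nat.div_pos (Nat.le_of_dvd (by omega) hrdvd2) hrpos
    rw [hbNdef]
    exact Nat.one_le_iff_ne_zero.2 (by positivity)
  have hdN1 : 1 ≤ dN := by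
    have h1 : 0 < (p - q) / r := Nat.div_pos (Nat.le_of_dvd (by omega) hrdvd3) hrpos
    omega
  have hn0 : 0 < n := by
    have h1 : (1:ℝ) ≤ (bN : ℝ) := by exact_mod_cast hbN1
    linarith [hbcast]
  have hnm : n < m := by
    have h1 : (1:ℝ) ≤ (dN : ℝ) := by exact_mod_cast hdN1
    linarith [hdcast]
  have hdint : (aN : ℤ) = (bN : ℤ) + 2 * (dN : ℤ) := by
    have h1 : ((aN : ℤ) : ℝ) = ((bN : ℤ) : ℝ) + 2 * ((dN : ℤ) : ℝ) := by
      push_cast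
      rw [hacast, hbcast]
      push_cast [hdcast]
      ring
    exact_mod_cast h1
  -- positivity of C₀
  have hppos : (0:ℝ) < (p:ℝ) := by positivity
  have hqpos : (0:ℝ) < (q:ℝ) := by positivity
  have hApos : 0 < A := by
    rw [hA]
    have := Real.rpow_pos_of_pos hppos ((1:ℝ)/((p:ℝ)-1))
    positivity
  have hBpos : 0 < B := by
    rw [hB]
    have := Real.rpow_pos_of_pos hqpos ((1:ℝ)/((q:ℝ)-1))
    positivity
  have hC₀pos : 0 < C₀ := by
    rw [hC₀]
    have hp1 : (0:ℝ) < (p:ℝ) - 1 := by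
      have : (3:ℝ) ≤ (p:ℝ) := by exact_mod_cast hp3
      linarith
    have hq1 : (0:ℝ) < (q:ℝ) - 1 := by
      have : (2:ℝ) ≤ (q:ℝ) := by exact_mod_cast hq
      linarith
    positivity
  -- pass to the normalized function tt
  set γ : ℝ := ε * C₀ with hγdef
  have hγ : γ ≠ 0 := by
    rcases hε with rfl | rfl
    · simp only [hγdef, one_mul]; exact ne_of_gt hC₀pos
    · simp only [hγdef, neg_one_mul, ne_eq, neg_eq_zero]; exact ne_of_gt hC₀pos
  have hTset : ∀ s : ℝ, {θ ∈ Set.Ico (0 : ℝ) (2 * Real.pi) | T θ s = 0}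
      = {θ ∈ Set.Ico (0 : ℝ) (2 * Real.pi) | NZ.tt γ c m n s θ = 0} := by
    intro s
    ext θ
    simp only [Set.mem_setOf_eq, and_congr_right_iff]
    intro _
    have heq : T θ s = ε * NZ.tt γ c m n s θ := by
      rw [hT θ s, NZ.tt, NZ.ff, NZ.gg, hγdef]
      rcases hε with rfl | rfl <;> ring
    rw [heq]
    constructor
    · intro h
      rcases mul_eq_zero.1 h with h' | h'
      · exfalso; rcases hε with rfl | rfl <;> norm_num at h'
      · exact h'
    · intro h; rw [h, mul_zero]
  rw [hTset s₁, hTset s₂]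
  exact NZ.main_count hn0 hnm hγ
    (b := (bN : ℤ)) (a := (aN : ℤ)) (d := (dN : ℤ))
    (by push_cast; exact hbcast) (by push_cast; exact hacast) hdint hs₁ hs₁₂
end

section
/- Let p ≥ 2 be an integer and set n = (p+1)/2. Let s > 0, c ∈ ℝ, and ε ∈ {1, −1}, and assume it is not the case that s = 1 and sin c = 0. Then Set.ncard {θ ∈ [0, 2π) | ε·s·sin(nθ + c) + sin(nθ) = 0} = p + 1. -/
/-- Lemma 4.2, case `p = q`: for `n = (p+1)/2`, `s > 0` and
not (`s = 1` and `sin c = 0`), the number of zeros of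
`ε s sin(nθ + c) + sin(nθ)` in `[0, 2π)` is `p + 1`. -/
theorem number_of_zeros_equal_exponents
    (p : ℕ) (hp : 2 ≤ p)
    (n : ℝ) (hn : n = ((p : ℝ) + 1) / 2)
    (s : ℝ) (hs : 0 < s) (c : ℝ) (ε : ℝ) (hε : ε = 1 ∨ ε = -1)
    (h : ¬ (s = 1 ∧ Real.sin c = 0)) :
    ({θ ∈ Set.Ico (0 : ℝ) (2 * Real.pi) |
        ε * s * Real.sin (n * θ + c) + Real.sin (n * θ) = 0}).ncard = p + 1 := by
  have hπ := Real.pi_pos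
  have hn0 : 0 < n := by
    rw [hn]; positivity
  have h2n : 2 * n = (p : ℝ) + 1 := by rw [hn]; ring
  have hε2 : ε ^ 2 = 1 := by rcases hε with h1 | h1 <;> rw [h1] <;> norm_num
  have hεne : ε ≠ 0 := by rcases hε with h1 | h1 <;> rw [h1] <;> norm_num
  set z : ℂ := ⟨ε * s * Real.cos c + 1, ε * s * Real.sin c⟩ with hzdef
  have hz : z ≠ 0 := by
    intro h0
    have hre : ε * s * Real.cos c + 1 = 0 := congrArg Complex.re h0
    have him : ε * s * Real.sin c = 0 := congrArg Complex.im h0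
    have hsc : Real.sin c = 0 := by
      have : ε * s ≠ 0 := mul_ne_zero hεne (ne_of_gt hs)
      exact (mul_eq_zero.mp him).resolve_left this
    have hcc : Real.cos c ^ 2 = 1 := by
      have := Real.sin_sq_add_cos_sq c
      nlinarith
    have hx : ε * s * Real.cos c = -1 := by linarith
    have hx2 : (ε * s * Real.cos c) ^ 2 = (-1 : ℝ) ^ 2 := by rw [hx]
    have hs2 : s ^ 2 = 1 := by linear_combination hx2 - s ^ 2 * Real.cos c ^ 2 * hε2 - s ^ 2 * hcc
    have hs1 : s = 1 := by nlinarith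
    exact h ⟨hs1, hsc⟩
  set R : ℝ := ‖z‖ with hRdef
  set φ : ℝ := Complex.arg z with hφdef
  have hR : 0 < R := by
    simpa [hRdef] using (norm_pos_iff.mpr hz)
  have ha : ε * s * Real.cos c + 1 = R * Real.cos φ := by
    have hzre : z.re = ε * s * Real.cos c + 1 := rfl
    rw [hφdef, Complex.cos_arg hz, ← hRdef, hzre]
    field_simp [hR.ne']
  have hb : ε * s * Real.sin c = R * Real.sin φ := by
    have hzim : z.im = ε * s * Real.sin c := rfl
    rw [hφdef, Complex.sin_arg, ← hRdef, hzim]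
    field_simp [hR.ne']
  have key : ∀ θ : ℝ, ε * s * Real.sin (n * θ + c) + Real.sin (n * θ)
      = R * Real.sin (n * θ + φ) := by
    intro θ
    rw [Real.sin_add, Real.sin_add]
    linear_combination Real.sin (n * θ) * ha + Real.cos (n * θ) * hb
  set g : ℤ → ℝ := fun k => ((k : ℝ) * Real.pi - φ) / n with hgdef
  set T : Set ℤ := {k : ℤ | φ ≤ (k : ℝ) * Real.pi ∧
      (k : ℝ) * Real.pi < φ + ((p : ℝ) + 1) * Real.pi} with hTdef
  have hset : {θ ∈ Set.Ico (0 : ℝ) (2 * Real.pi) |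
      ε * s * Real.sin (n * θ + c) + Real.sin (n * θ) = 0} = g '' T := by
    ext θ
    simp only [Set.mem_setOf_eq, Set.mem_Ico, Set.mem_image, hTdef, hgdef]
    constructor
    · rintro ⟨⟨h0, h2⟩, hf⟩
      rw [key θ] at hf
      have hsin : Real.sin (n * θ + φ) = 0 :=
        (mul_eq_zero.mp hf).resolve_left (ne_of_gt hR)
      obtain ⟨k, hk⟩ := Real.sin_eq_zero_iff.mp hsin
      refine ⟨k, ⟨?_, ?_⟩, ?_⟩
      · nlinarith [mul_nonneg (le_of_lt hn0) h0]
      · nlinarith [mul_lt_mul_of_pos_left h2 hn0]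
      · field_simp
        linarith [hk]
    · rintro ⟨k, ⟨hk1, hk2⟩, rfl⟩
      have hnθ : n * (((k : ℝ) * Real.pi - φ) / n) + φ = (k : ℝ) * Real.pi := by
        field_simp
        ring
      refine ⟨⟨?_, ?_⟩, ?_⟩
      · apply div_nonneg _ (le_of_lt hn0); linarith
      · rw [div_lt_iff₀ hn0]; nlinarith
      · rw [key, hnθ, Real.sin_int_mul_pi, mul_zero]
  have ginj : Function.Injective g := by
    intro k k' hkk
    simp only [hgdef] at hkk
    field_simp at hkk
    have h3 : ((k : ℝ) - k') * Real.pi = 0 := by linarith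
    exact_mod_cast sub_eq_zero.mp ((mul_eq_zero.mp h3).resolve_right (ne_of_gt hπ))
  rw [hset, Set.ncard_image_of_injective _ ginj]
  set m : ℤ := ⌈φ / Real.pi⌉ with hmdef
  have hT : T = ↑(Finset.Ico m (m + (p + 1 : ℤ))) := by
    ext k
    simp only [hTdef, Set.mem_setOf_eq, Finset.coe_Ico, Set.mem_Ico, hmdef]
    constructor
    · rintro ⟨h1, h2⟩
      constructor
      · rw [Int.ceil_le]
        rw [div_le_iff₀ hπ]
        exact h1
      · have : k - (p + 1 : ℤ) < ⌈φ / Real.pi⌉ := by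
          rw [Int.lt_ceil, lt_div_iff₀ hπ]
          push_cast
          nlinarith
        omega
    · rintro ⟨h1, h2⟩
      have h1' : φ / Real.pi ≤ (k : ℝ) := by
        rw [← Int.ceil_le] at *
        exact_mod_cast h1
      have h2' : ((k - (p + 1 : ℤ) : ℤ) : ℝ) < φ / Real.pi := by
        rw [← Int.lt_ceil]
        omega
      constructor
      · rw [div_le_iff₀ hπ] at h1'; exact h1'
      · rw [lt_div_iff₀ hπ] at h2'
        push_cast at h2'
        nlinarith
  rw [hT, Set.ncard_coe_finset, Int.card_Ico]
  simp
end

section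
/- Let p > q ≥ 2 be integers, r = gcd(p−1, q−1), m = (p−1)(q+1)/(2r), n = (p+1)(q−1)/(2r), A = 1/p^{1/(p−1)}, B = 1/q^{1/(q−1)}, C₀ = ((p−1)B)/((q−1)A), c ∈ ℝ, ε ∈ {1, −1}, and T(θ, s) = ε·s·sin(nθ + c) + C₀·sin(mθ). Then there exists δ > 0 such that for every s with 0 < s < δ, Set.ncard {θ ∈ [0, 2π) | T(θ, s) = 0} = (p−1)(q+1)/r (which equals 2m, the number of zeros of sin(mθ) in [0, 2π)). -/
open Real Set
set_option maxHeartbeats 1000000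

lemma abs_sin_shift (x : ℝ) (ℓ : ℤ) : |Real.sin (x + ℓ * π)| = |Real.sin x| := by
  rw [Real.sin_add_int_mul_pi, abs_mul]
  have : |(-1:ℝ) ^ ℓ| = 1 := by
    rcases Int.even_or_odd ℓ with h | h
    · rw [h.neg_one_zpow]; simp
    · rw [Odd.neg_one_zpow h]; simp
  rw [this, one_mul]

lemma abs_sin_ge (y : ℝ) (h1 : π/4 ≤ |y|) (h2 : |y| ≤ π/2) :
    Real.sqrt 2 / 2 ≤ |Real.sin y| := by
  have hy : |Real.sin y| = Real.sin |y| := by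
    rcases abs_cases y with ⟨h, hy0⟩ | ⟨h, hy0⟩
    · rw [h, abs_of_nonneg (Real.sin_nonneg_of_nonneg_of_le_pi hy0 (by linarith [Real.pi_pos]))]
    · rw [h, abs_of_nonpos (Real.sin_nonpos_of_nonpos_of_neg_pi_le hy0.le (by nlinarith [Real.pi_pos])), Real.sin_neg]
  rw [hy, ← Real.sin_pi_div_four]
  exact Real.sin_le_sin_of_le_of_le_pi_div_two (by linarith [Real.pi_pos]) h2 h1

lemma cos_ge_of_abs_le (y : ℝ) (h : |y| ≤ π/4) : Real.sqrt 2 / 2 ≤ Real.cos y := by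
  rw [← Real.cos_pi_div_four, ← Real.cos_abs y]
  exact Real.cos_le_cos_of_nonneg_of_le_pi (abs_nonneg y) (by linarith [Real.pi_pos]) h


/-- key counting lemma -/
lemma key_count (m C s B' : ℝ) (N : ℕ)
    (hm : 0 < m) (hC : 0 < C)
    (hN : (N:ℝ) = 2*m)
    (g g' : ℝ → ℝ)
    (hgd : ∀ θ, HasDerivAt g (g' θ) θ)
    (hgb : ∀ θ, |g θ| ≤ s)
    (hg'b : ∀ θ, |g' θ| ≤ B')
    (hs1 : s < C * (Real.sqrt 2/2))
    (hs2 : B' < C * m * (Real.sqrt 2/2))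
    (f : ℝ → ℝ) (hf : ∀ θ, f θ = g θ + C * Real.sin (m*θ))
    (hper : ∀ θ, f (θ + 2*π) = 0 ↔ f θ = 0) :
    {θ ∈ Set.Ico (0:ℝ) (2*π) | f θ = 0}.ncard = N := by
  have hpi := Real.pi_pos
  have hsqrt2 : (1:ℝ) ≤ Real.sqrt 2 / 2 * 2 := by
    rw [div_mul_cancel₀]
    · nlinarith [Real.sq_sqrt (by norm_num : (2:ℝ) ≥ 0), Real.sqrt_nonneg 2]
    · norm_num
  have hs0 : 0 ≤ s := le_trans (abs_nonneg _) (hgb 0)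
  have hB'0 : 0 ≤ B' := le_trans (abs_nonneg _) (hg'b 0)
  set η : ℝ := π / (4*m) with hη
  have hηpos : 0 < η := by positivity
  set θk : ℕ → ℝ := fun k => k * π / m with hθk
  have hmη : m * η = π/4 := by rw [hη]; field_simp
  have hmθk : ∀ k : ℕ, m * θk k = k * π := by
    intro k; simp only [hθk]; field_simp
  have hN1 : 1 ≤ N := by
    by_contra h
    push_neg at h
    interval_cases N
    simp at hN; linarith
  have hNm : (N:ℝ) * π / m = 2 * π := by
    rw [hN]; field_simp
  have hη2 : 4 * η = π / m := by rw [hη]; field_simp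
  have hmhalf : (1:ℝ)/2 ≤ m := by
    have : (1:ℝ) ≤ (N:ℝ) := by exact_mod_cast hN1
    linarith [hN ▸ this]
  have hη2π : η ≤ π := by
    rw [hη, div_le_iff₀ (by linarith)]; nlinarith
  -- derivative of f
  have hfd : ∀ θ, HasDerivAt f (g' θ + C * (Real.cos (m*θ) * m)) θ := by
    intro θ
    have h1 : HasDerivAt (fun θ : ℝ => Real.sin (m*θ)) (Real.cos (m*θ) * m) θ := by
      have := (Real.hasDerivAt_sin (m*θ)).comp θ ((hasDerivAt_id θ).const_mul m)
      simpa [mul_comm, Function.comp_def] using this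
    have h2 := (hgd θ).add (h1.const_mul C)
    have he : f = fun θ => g θ + C * Real.sin (m*θ) := funext hf
    rw [he]
    exact h2
  have hfc : Continuous f := by
    rw [continuous_iff_continuousAt]
    exact fun θ => (hfd θ).continuousAt
  -- Step 1: localization of zeros
  have loc : ∀ θ : ℝ, -η ≤ θ → θ < 2*π - η → f θ = 0 →
      ∃ k : ℕ, k < N ∧ θ ∈ Set.Icc (θk k - η) (θk k + η) := by
    intro θ hθ1 hθ2 hθ0
    have habs : C * |Real.sin (m*θ)| ≤ s := by
      have h0 : C * Real.sin (m*θ) = - g θ := by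
        have := hf θ; rw [hθ0] at this; linarith
      calc C * |Real.sin (m*θ)| = |C * Real.sin (m*θ)| := by
              rw [abs_mul, abs_of_nonneg hC.le]
        _ = |g θ| := by rw [h0, abs_neg]
        _ ≤ s := hgb θ
    have hsin : |Real.sin (m*θ)| < Real.sqrt 2/2 := by
      by_contra h; push_neg at h
      have := mul_le_mul_of_nonneg_left h hC.le
      linarith
    set x := m*θ with hx
    obtain ⟨ℓ, hround⟩ : ∃ ℓ:ℤ, |x/π - (ℓ:ℝ)| ≤ 1/2 := ⟨round (x/π), abs_sub_round _⟩
    have hround2 : |x - ℓ*π| ≤ π/2 := by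
      have he : x - ℓ*π = (x/π - ℓ) * π := by field_simp
      rw [he, abs_mul, abs_of_pos hpi]
      nlinarith
    have h4 : |x - ℓ*π| < π/4 := by
      by_contra h; push_neg at h
      have h5 : Real.sqrt 2 / 2 ≤ |Real.sin (x - ℓ*π)| := abs_sin_ge _ h hround2
      have h6 : |Real.sin (x - ℓ*π)| = |Real.sin x| := by
        have := abs_sin_shift (x - ℓ*π) ℓ
        simpa using this.symm
      rw [h6] at h5
      linarith
    have hxlb : -(π/4) ≤ x := by
      have : m * (-η) ≤ m * θ := by nlinarith
      rw [show m * (-η) = -(π/4) by rw [← hmη]; ring] at this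
      exact this
    have hxub : x < (N:ℝ)*π - π/4 := by
      have h6 : m * θ < m * (2*π - η) := by nlinarith
      have h7 : m * (2*π - η) = (N:ℝ)*π - π/4 := by
        rw [mul_sub, hmη, hN]; ring
      rw [h7] at h6
      exact h6
    have hl := abs_lt.mp h4
    have hlub : (ℓ:ℝ)*π < x + π/4 := by linarith [hl.1]
    have hllb : x - π/4 < (ℓ:ℝ)*π := by linarith [hl.2]
    have hℓ0 : 0 ≤ ℓ := by
      by_contra h; push_neg at h
      have h1 : ℓ ≤ -1 := by omega
      have h2 : (ℓ:ℝ) ≤ -1 := by exact_mod_cast h1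
      have h3 : (ℓ:ℝ)*π ≤ -1*π := mul_le_mul_of_nonneg_right h2 hpi.le
      linarith
    have hℓN : ℓ < (N:ℤ) := by
      by_contra h; push_neg at h
      have h1 : (N:ℝ) ≤ (ℓ:ℝ) := by exact_mod_cast h
      have h3 : (N:ℝ)*π ≤ (ℓ:ℝ)*π := mul_le_mul_of_nonneg_right h1 hpi.le
      linarith
    refine ⟨ℓ.toNat, ?_, ?_⟩
    · omega
    · have hcast : ((ℓ.toNat : ℕ) : ℝ) = (ℓ:ℝ) := by
        exact_mod_cast congrArg (Int.cast : ℤ → ℝ) (Int.toNat_of_nonneg hℓ0)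
      have hdist : |θ - θk ℓ.toNat| ≤ η := by
        have h9 : m * (θ - θk ℓ.toNat) = x - ℓ*π := by
          rw [mul_sub, hmθk, hcast, hx]
        have : |m * (θ - θk ℓ.toNat)| < π/4 := by rw [h9]; exact h4
        rw [abs_mul, abs_of_pos hm] at this
        rw [← hmη] at this
        nlinarith [abs_nonneg (θ - θk ℓ.toNat)]
      have := abs_le.mp hdist
      constructor <;> linarith [this.1, this.2]
  -- Step 2: exactly one zero in each window
  have EU : ∀ k : ℕ, ∃! z, z ∈ Set.Icc (θk k - η) (θk k + η) ∧ f z = 0 := by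
    intro k
    have he2 : ((-1:ℝ)^k) * ((-1:ℝ)^k) = 1 := by
      rw [← pow_add]
      exact Even.neg_one_pow ⟨k, rfl⟩
    have hlohi : θk k - η ≤ θk k + η := by linarith
    set F : ℝ → ℝ := fun θ => ((-1:ℝ)^k) * f θ with hF
    have hFd : ∀ θ, HasDerivAt F (((-1:ℝ)^k) * (g' θ + C * (Real.cos (m*θ) * m))) θ :=
      fun θ => (hfd θ).const_mul _
    have hFpos : ∀ θ ∈ Set.Icc (θk k - η) (θk k + η),
        0 < ((-1:ℝ)^k) * (g' θ + C * (Real.cos (m*θ) * m)) := by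
      intro θ hθ
      have hy : |m*θ - k*π| ≤ π/4 := by
        have h1 : m*θ - k*π = m * (θ - θk k) := by rw [mul_sub, hmθk]
        rw [h1, abs_mul, abs_of_pos hm]
        have h2 : |θ - θk k| ≤ η := by
          rw [abs_le]; constructor <;> [linarith [hθ.1]; linarith [hθ.2]]
        calc m * |θ - θk k| ≤ m * η := by nlinarith
          _ = π/4 := hmη
      have hcos : Real.sqrt 2/2 ≤ ((-1:ℝ)^k) * Real.cos (m*θ) := by
        have h3 : Real.cos (m*θ) = (-1)^k * Real.cos (m*θ - k*π) := by
          have h3' := Real.cos_add_nat_mul_pi (m*θ - k*π) k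
          rw [sub_add_cancel] at h3'
          exact h3'.symm.symm ▸ h3'
        rw [h3, ← mul_assoc, he2, one_mul]
        exact cos_ge_of_abs_le _ hy
      have hg'θ : -B' ≤ ((-1:ℝ)^k) * g' θ := by
        have h4 : |((-1:ℝ)^k) * g' θ| ≤ B' := by
          rw [abs_mul, abs_pow, abs_neg, abs_one, one_pow, one_mul]
          exact hg'b θ
        linarith [(abs_le.mp h4).1]
      have h5 : C * m * (Real.sqrt 2/2) ≤ ((-1:ℝ)^k) * (C * (Real.cos (m*θ) * m)) := by
        have := mul_le_mul_of_nonneg_left hcos (by positivity : (0:ℝ) ≤ C * m)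
        calc C * m * (Real.sqrt 2/2) ≤ C * m * (((-1:ℝ)^k) * Real.cos (m*θ)) := this
          _ = ((-1:ℝ)^k) * (C * (Real.cos (m*θ) * m)) := by ring
      calc (0:ℝ) < C * m * (Real.sqrt 2/2) - B' := by linarith
        _ ≤ ((-1:ℝ)^k) * (g' θ + C * (Real.cos (m*θ) * m)) := by
            rw [mul_add]; linarith
    have hFc : Continuous F := continuous_const.mul hfc
    have hmono : StrictMonoOn F (Set.Icc (θk k - η) (θk k + η)) := by
      apply strictMonoOn_of_deriv_pos (convex_Icc _ _) hFc.continuousOn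
      intro θ hθ
      rw [interior_Icc] at hθ
      rw [(hFd θ).deriv]
      exact hFpos θ (Set.mem_Icc_of_Ioo hθ)
    have hFhi : 0 < F (θk k + η) := by
      have hsin : Real.sin (m*(θk k + η)) = (-1)^k * (Real.sqrt 2/2) := by
        rw [show m*(θk k + η) = π/4 + k*π by rw [mul_add, hmθk, hmη]; ring,
          Real.sin_add_nat_mul_pi, Real.sin_pi_div_four]
      have hFv : F (θk k + η) = ((-1:ℝ)^k) * g (θk k + η) + C * (Real.sqrt 2/2) := by
        show ((-1:ℝ)^k) * f (θk k + η) = _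
        rw [hf, hsin]
        calc ((-1:ℝ)^k) * (g (θk k + η) + C * ((-1)^k * (Real.sqrt 2/2)))
            = (-1)^k * g (θk k + η) + ((-1)^k * (-1)^k) * (C * (Real.sqrt 2/2)) := by ring
          _ = (-1)^k * g (θk k + η) + C * (Real.sqrt 2/2) := by rw [he2, one_mul]
      have hb : |((-1:ℝ)^k) * g (θk k + η)| ≤ s := by
        rw [abs_mul, abs_pow, abs_neg, abs_one, one_pow, one_mul]
        exact hgb _
      rw [hFv]
      linarith [(abs_le.mp hb).1]
    have hFlo : F (θk k - η) < 0 := by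
      have hsin : Real.sin (m*(θk k - η)) = -((-1:ℝ)^k * (Real.sqrt 2/2)) := by
        rw [show m*(θk k - η) = -(π/4) + k*π by rw [mul_sub, hmθk, hmη]; ring,
          Real.sin_add_nat_mul_pi, Real.sin_neg, Real.sin_pi_div_four]
        ring
      have hFv : F (θk k - η) = ((-1:ℝ)^k) * g (θk k - η) - C * (Real.sqrt 2/2) := by
        show ((-1:ℝ)^k) * f (θk k - η) = _
        rw [hf, hsin]
        calc ((-1:ℝ)^k) * (g (θk k - η) + C * (-((-1)^k * (Real.sqrt 2/2))))
            = (-1)^k * g (θk k - η) - ((-1)^k * (-1)^k) * (C * (Real.sqrt 2/2)) := by ring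
          _ = (-1)^k * g (θk k - η) - C * (Real.sqrt 2/2) := by rw [he2, one_mul]
      have hb : |((-1:ℝ)^k) * g (θk k - η)| ≤ s := by
        rw [abs_mul, abs_pow, abs_neg, abs_one, one_pow, one_mul]
        exact hgb _
      rw [hFv]
      linarith [(abs_le.mp hb).2]
    -- existence via IVT
    have hIVT : (0:ℝ) ∈ F '' Set.Icc (θk k - η) (θk k + η) :=
      intermediate_value_Icc hlohi hFc.continuousOn ⟨hFlo.le, hFhi.le⟩
    obtain ⟨z, hz, hFz⟩ := hIVT
    have hfz : f z = 0 := by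
      have h6 : ((-1:ℝ)^k) * f z = 0 := hFz
      rcases mul_eq_zero.mp h6 with h | h
      · exfalso
        have := he2
        rw [h] at this
        simp at this
      · exact h
    refine ⟨z, ⟨hz, hfz⟩, ?_⟩
    intro y hy
    have hFy : F y = 0 := by
      show ((-1:ℝ)^k) * f y = 0
      rw [hy.2, mul_zero]
    exact hmono.injOn hy.1 hz (by rw [hFy, hFz])
  -- Step 3: counting
  classical
  choose Z hZ using fun k => (EU k).exists
  have hZuniq : ∀ k y, y ∈ Set.Icc (θk k - η) (θk k + η) → f y = 0 → y = Z k := by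
    intro k y h1 h2
    exact (EU k).unique ⟨h1, h2⟩ (hZ k)
  have hθk0 : θk 0 = 0 := by simp [hθk]
  have hθkub : ∀ k, k < N → θk k ≤ 2*π - 4*η := by
    intro k hk
    have hk1 : (k:ℝ) ≤ (N:ℝ) - 1 := by
      have : (k:ℝ) + 1 ≤ (N:ℝ) := by exact_mod_cast hk
      linarith
    have h1 : (k:ℝ)*π/m ≤ ((N:ℝ)-1)*π/m := by
      gcongr
    have h2 : ((N:ℝ)-1)*π/m = 2*π - 4*η := by
      rw [hη2, sub_mul, one_mul, sub_div, hNm]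
    rw [hθk]
    rw [h2] at h1
    exact h1
  have hZub : ∀ k, k < N → Z k ≤ 2*π - 3*η := by
    intro k hk
    have := (hZ k).1.2
    linarith [hθkub k hk]
  have hZlb : ∀ k, -η ≤ Z k := by
    intro k
    have h0 : (0:ℝ) ≤ θk k := by
      rw [hθk]; positivity
    linarith [(hZ k).1.1]
  have hZ0 : ∀ k, Z k < 0 → k = 0 := by
    intro k hk
    by_contra h
    have hk1 : (1:ℝ) ≤ (k:ℝ) := by
      have : 1 ≤ k := Nat.one_le_iff_ne_zero.mpr h
      exact_mod_cast this
    have h4 : 4*η ≤ θk k := by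
      rw [hη2, hθk]
      have : π/m ≤ (k:ℝ)*π/m := by gcongr; nlinarith
      exact this
    linarith [(hZ k).1.1]
  set ψ : ℕ → ℝ := fun k => if Z k < 0 then Z k + 2*π else Z k with hψ
  have hψdef : ∀ k, ψ k = if Z k < 0 then Z k + 2*π else Z k := fun k => rfl
  have hψmem : ∀ k, k < N → (ψ k ∈ Set.Ico (0:ℝ) (2*π) ∧ f (ψ k) = 0) := by
    intro k hk
    rw [hψdef]
    by_cases hc : Z k < 0
    · rw [if_pos hc]
      refine ⟨⟨by linarith [hZlb k, hη2π], by linarith⟩, ?_⟩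
      exact (hper (Z k)).mpr (hZ k).2
    · push_neg at hc
      rw [if_neg (not_lt.mpr hc)]
      exact ⟨⟨hc, by linarith [hZub k hk, hηpos]⟩, (hZ k).2⟩
  have himg : {θ ∈ Set.Ico (0:ℝ) (2*π) | f θ = 0} = ψ '' ↑(Finset.range N) := by
    ext θ
    simp only [Set.mem_setOf_eq, Set.mem_image, Finset.coe_range, Set.mem_Iio]
    constructor
    · rintro ⟨hmem, hzero⟩
      by_cases hc : θ < 2*π - η
      · obtain ⟨k, hkN, hIk⟩ := loc θ (by linarith [hmem.1, hηpos.le]) hc hzero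
        have heq : θ = Z k := hZuniq k θ hIk hzero
        refine ⟨k, hkN, ?_⟩
        rw [hψdef, if_neg (by rw [← heq]; exact not_lt.mpr hmem.1)]
        exact heq.symm
      · push_neg at hc
        have hz' : f (θ - 2*π) = 0 := by
          apply (hper (θ - 2*π)).mp
          rw [sub_add_cancel]
          exact hzero
        obtain ⟨k, hkN, hIk⟩ := loc (θ - 2*π) (by linarith) (by linarith [hmem.2, hηpos]) hz'
        have heq : θ - 2*π = Z k := hZuniq k _ hIk hz'
        refine ⟨k, hkN, ?_⟩
        rw [hψdef, if_pos (by rw [← heq]; linarith [hmem.2])]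
        rw [← heq]; ring
    · rintro ⟨k, hk, rfl⟩
      exact ⟨(hψmem k hk).1, (hψmem k hk).2⟩
  have hinj : Set.InjOn ψ ↑(Finset.range N) := by
    intro k1 h1 k2 h2 heq
    simp only [Finset.coe_range, Set.mem_Iio] at h1 h2
    by_cases c1 : Z k1 < 0 <;> by_cases c2 : Z k2 < 0
    · rw [hZ0 k1 c1, hZ0 k2 c2]
    · exfalso
      have e1 : ψ k1 = Z k1 + 2*π := by rw [hψdef, if_pos c1]
      have e2 : ψ k2 = Z k2 := by rw [hψdef, if_neg c2]
      rw [e1, e2] at heq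
      have := hZlb k1
      have := hZub k2 h2
      linarith
    · exfalso
      have e1 : ψ k1 = Z k1 := by rw [hψdef, if_neg c1]
      have e2 : ψ k2 = Z k2 + 2*π := by rw [hψdef, if_pos c2]
      rw [e1, e2] at heq
      have := hZlb k2
      have := hZub k1 h1
      linarith
    · have e1 : ψ k1 = Z k1 := by rw [hψdef, if_neg c1]
      have e2 : ψ k2 = Z k2 := by rw [hψdef, if_neg c2]
      have hZeq : Z k1 = Z k2 := by rw [← e1, ← e2, heq]
      by_contra hne
      have hge : (1:ℝ) ≤ |(k1:ℝ) - (k2:ℝ)| := by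
        rcases lt_or_gt_of_ne hne with h | h
        · have h5 : (k1:ℝ) + 1 ≤ (k2:ℝ) := by exact_mod_cast h
          rw [abs_sub_comm, abs_of_nonneg (by linarith)]
          linarith
        · have h5 : (k2:ℝ) + 1 ≤ (k1:ℝ) := by exact_mod_cast h
          rw [abs_of_nonneg (by linarith)]
          linarith
      have hd : |θk k1 - θk k2| ≤ 2*η := by
        have a1 := (hZ k1).1.1
        have a2 := (hZ k1).1.2
        have b1 := (hZ k2).1.1
        have b2 := (hZ k2).1.2
        rw [abs_le]
        constructor <;> [linarith [hZeq ▸ a2, b1]; linarith [hZeq ▸ a1, b2]]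
      have hδ : |θk k1 - θk k2| = |(k1:ℝ) - (k2:ℝ)| * π / m := by
        rw [hθk]
        simp only []
        rw [show (k1:ℝ)*π/m - (k2:ℝ)*π/m = ((k1:ℝ) - (k2:ℝ))*π/m by ring]
        rw [abs_div, abs_mul, abs_of_pos hpi, abs_of_pos hm]
      have h7 : π/m ≤ |(k1:ℝ) - (k2:ℝ)| * π / m := by gcongr; nlinarith
      rw [hδ] at hd
      rw [← hη2] at h7
      linarith
  rw [himg, Set.ncard_image_of_injOn hinj, Set.ncard_coe_finset, Finset.card_range]

/-- for `p > q` and sufficiently small `s > 0`, the number of zeros of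
`T(θ, s)` in `[0, 2π)` equals `(p-1)(q+1)/r`, the number of zeros of `sin(mθ)`. -/
theorem number_of_zeros_for_small_parameter
    (p q : ℕ) (hq : 2 ≤ q) (hpq : q < p)
    (r : ℕ) (hr : r = Nat.gcd (p - 1) (q - 1))
    (m n : ℝ)
    (hm : m = ((p : ℝ) - 1) * ((q : ℝ) + 1) / (2 * r))
    (hn : n = ((p : ℝ) + 1) * ((q : ℝ) - 1) / (2 * r))
    (A B : ℝ)
    (hA : A = 1 / (p : ℝ) ^ ((1 : ℝ) / ((p : ℝ) - 1)))
    (hB : B = 1 / (q : ℝ) ^ ((1 : ℝ) / ((q : ℝ) - 1)))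
    (C₀ : ℝ) (hC₀ : C₀ = ((p : ℝ) - 1) * B / (((q : ℝ) - 1) * A))
    (c : ℝ) (ε : ℝ) (hε : ε = 1 ∨ ε = -1)
    (T : ℝ → ℝ → ℝ)
    (hT : ∀ θ s : ℝ, T θ s = ε * s * Real.sin (n * θ + c) + C₀ * Real.sin (m * θ)) :
    ∃ δ > 0, ∀ s : ℝ, 0 < s → s < δ →
      ({θ ∈ Set.Ico (0 : ℝ) (2 * Real.pi) | T θ s = 0}).ncard
        = (p - 1) * (q + 1) / r := by
  have hp3 : 3 ≤ p := by omega
  have hP : (3:ℝ) ≤ (p:ℝ) := by exact_mod_cast hp3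
  have hQ : (2:ℝ) ≤ (q:ℝ) := by exact_mod_cast hq
  have hεabs : |ε| = 1 := by rcases hε with h | h <;> simp [h]
  have hApos : 0 < A := by
    rw [hA]; positivity
  have hBpos : 0 < B := by
    rw [hB]; positivity
  have hCpos : 0 < C₀ := by
    rw [hC₀]
    apply div_pos
    · nlinarith
    · nlinarith
  have hr0 : 0 < r := by
    rw [hr]
    apply Nat.gcd_pos_of_pos_left
    omega
  have hrR : (0:ℝ) < (r:ℝ) := by exact_mod_cast hr0
  have hmpos : 0 < m := by
    rw [hm]; apply div_pos; nlinarith; nlinarith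
  have hnpos : 0 < n := by
    rw [hn]; apply div_pos; nlinarith; nlinarith
  -- N and M
  set N : ℕ := (p - 1) * (q + 1) / r with hN
  set M : ℕ := (p + 1) * (q - 1) / r with hM
  have hdvd1 : r ∣ (p - 1) * (q + 1) := hr ▸ Dvd.dvd.mul_right (Nat.gcd_dvd_left _ _) _
  have hdvd2 : r ∣ (p + 1) * (q - 1) := hr ▸ Dvd.dvd.mul_left (Nat.gcd_dvd_right _ _) _
  have hcastp : ((p - 1 : ℕ) : ℝ) = (p:ℝ) - 1 := by
    have : 1 ≤ p := by omega
    push_cast [this]; ring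
  have hcastq : ((q - 1 : ℕ) : ℝ) = (q:ℝ) - 1 := by
    have : 1 ≤ q := by omega
    push_cast [this]; ring
  have hNr : (N:ℝ) = 2 * m := by
    have h1 : N * r = (p - 1) * (q + 1) := Nat.div_mul_cancel hdvd1
    have h2 : (N:ℝ) * r = ((p:ℝ) - 1) * ((q:ℝ) + 1) := by
      have h3 := congrArg (Nat.cast : ℕ → ℝ) h1
      push_cast [Nat.cast_sub (show 1 ≤ p by omega)] at h3
      exact h3
    rw [hm]
    field_simp
    linarith [h2]
  have hMr : (M:ℝ) = 2 * n := by
    have h1 : M * r = (p + 1) * (q - 1) := Nat.div_mul_cancel hdvd2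
    have h2 : (M:ℝ) * r = ((p:ℝ) + 1) * ((q:ℝ) - 1) := by
      have h3 := congrArg (Nat.cast : ℕ → ℝ) h1
      push_cast [Nat.cast_sub (show 1 ≤ q by omega)] at h3
      exact h3
    rw [hn]
    field_simp
    linarith [h2]
  -- parity
  set a' : ℕ := (p - 1) / r with ha'
  set b' : ℕ := (q - 1) / r with hb'
  have hpa : p - 1 = a' * r := (Nat.div_mul_cancel (hr ▸ Nat.gcd_dvd_left _ _)).symm
  have hqb : q - 1 = b' * r := (Nat.div_mul_cancel (hr ▸ Nat.gcd_dvd_right _ _)).symm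
  have hNval : N = a' * (q + 1) := by
    rw [hN, hpa, mul_comm a' r, mul_assoc, Nat.mul_div_cancel_left _ hr0]
  have hMval : M = (p + 1) * b' := by
    rw [hM, hqb, mul_comm b' r, mul_comm (p+1) (r * b'), mul_assoc, Nat.mul_div_cancel_left _ hr0, mul_comm]
  have hq1 : q + 1 = b' * r + 2 := by omega
  have hp1 : p + 1 = a' * r + 2 := by omega
  have hparity : N + M = 2 * (a' * r * b' + a' + b') := by
    rw [hNval, hMval, hq1, hp1]
    ring
  have hsign : ((-1:ℝ))^N * ((-1:ℝ))^M = 1 := by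
    rw [← pow_add, hparity]
    exact Even.neg_one_pow (even_two_mul _)
  -- choose δ
  refine ⟨min (C₀ * (Real.sqrt 2/2)) (C₀ * m * (Real.sqrt 2/2) / n), ?_, ?_⟩
  · apply lt_min
    · positivity
    · positivity
  intro s hs0 hsδ
  have hs1 : s < C₀ * (Real.sqrt 2/2) := lt_of_lt_of_le hsδ (min_le_left _ _)
  have hs2 : s * n < C₀ * m * (Real.sqrt 2/2) := by
    have := lt_of_lt_of_le hsδ (min_le_right _ _)
    rw [lt_div_iff₀ hnpos] at this
    exact this
  -- instantiate key lemma
  have hT2π : ∀ θ : ℝ, T (θ + 2*π) s = 0 ↔ T θ s = 0 := by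
    intro θ
    have e1 : n * (θ + 2*π) + c = (n*θ + c) + M * π := by
      rw [hMr]; ring
    have e2 : m * (θ + 2*π) = m*θ + N * π := by
      rw [hNr]; ring
    have e3 : T (θ + 2*π) s = ((-1:ℝ))^N * T θ s := by
      rw [hT, hT, e1, e2, Real.sin_add_nat_mul_pi, Real.sin_add_nat_mul_pi]
      have hMN : ((-1:ℝ))^M = ((-1:ℝ))^N := by
        have h2 : ((-1:ℝ))^N * ((-1:ℝ))^N = 1 := by
          rw [← pow_add]
          exact Even.neg_one_pow (Even.add_self _)
        calc ((-1:ℝ))^M = (((-1:ℝ))^N * ((-1:ℝ))^N) * ((-1:ℝ))^M := by rw [h2, one_mul]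
          _ = ((-1:ℝ))^N * (((-1:ℝ))^N * ((-1:ℝ))^M) := by ring
          _ = ((-1:ℝ))^N := by rw [hsign, mul_one]
      rw [hMN]
      ring
    rw [e3]
    constructor
    · intro h
      rcases mul_eq_zero.mp h with h | h
      · exfalso
        have := pow_ne_zero N (show (-1:ℝ) ≠ 0 by norm_num)
        exact this h
      · exact h
    · intro h; rw [h, mul_zero]
  have := key_count m C₀ s (s * n) N hmpos hCpos hNr
    (fun θ => ε * s * Real.sin (n*θ + c))
    (fun θ => ε * s * (Real.cos (n*θ + c) * n))
    (fun θ => by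
      have h1 : HasDerivAt (fun θ : ℝ => n*θ + c) n θ := by
        simpa using ((hasDerivAt_id θ).const_mul n).add_const c
      have h2 := (Real.hasDerivAt_sin (n*θ + c)).comp θ h1
      simpa [mul_comm] using h2.const_mul (ε * s))
    (fun θ => by
      rw [abs_mul, abs_mul, hεabs, one_mul, abs_of_pos hs0]
      nlinarith [Real.abs_sin_le_one (n*θ + c), abs_nonneg (Real.sin (n*θ+c))])
    (fun θ => by
      rw [abs_mul, abs_mul, hεabs, one_mul, abs_of_pos hs0, abs_mul, abs_of_pos hnpos]
      have h := mul_le_mul_of_nonneg_left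
        (mul_le_mul_of_nonneg_right (Real.abs_cos_le_one (n*θ+c)) hnpos.le) hs0.le
      simpa using h)
    hs1 hs2 (fun θ => T θ s) (fun θ => hT θ s) hT2π
  exact this
end

section
/- Let p > q ≥ 2 be integers, r = gcd(p−1, q−1), m = (p−1)(q+1)/(2r), n = (p+1)(q−1)/(2r), A = 1/p^{1/(p−1)}, B = 1/q^{1/(q−1)}, C₀ = ((p−1)B)/((q−1)A), c ∈ ℝ, ε ∈ {1, −1}, and T(θ, s) = ε·s·sin(nθ + c) + C₀·sin(mθ). Then for every s > 0, (p+1)(q−1)/r ≤ Set.ncard {θ ∈ [0, 2π) | T(θ, s) = 0} ≤ (p−1)(q+1)/r. -/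
open Polynomial in
lemma upper_aux (a C₀ c m n : ℝ) (hC₀ : C₀ ≠ 0)
    (M a1 a2 : ℕ) (hM : (M:ℝ) = 2*m) (ha1 : (a1:ℝ) = m+n) (ha2 : (a2:ℝ) = m-n)
    (h21 : a2 < a1) (h1M : a1 < M) :
    {θ ∈ Set.Ico (0:ℝ) (2*Real.pi) |
        a * Real.sin (n*θ+c) + C₀ * Real.sin (m*θ) = 0}.Finite ∧
    {θ ∈ Set.Ico (0:ℝ) (2*Real.pi) |
        a * Real.sin (n*θ+c) + C₀ * Real.sin (m*θ) = 0}.ncard ≤ M := by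
  set S := {θ ∈ Set.Ico (0:ℝ) (2*Real.pi) |
      a * Real.sin (n*θ+c) + C₀ * Real.sin (m*θ) = 0} with hS
  have h2M : a2 < M := h21.trans h1M
  have hM0 : M ≠ 0 := (Nat.pos_of_ne_zero (by intro h; omega)).ne'
  set Q : Polynomial ℂ := C ((a:ℂ) * Complex.exp ((c:ℂ)*Complex.I)) * X^a1
      + C ((C₀:ℂ)) * X^M
      - C ((a:ℂ) * Complex.exp (-(c:ℂ)*Complex.I)) * X^a2
      - C ((C₀:ℂ)) with hQ
  have hQne : Q ≠ 0 := by
    intro h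
    have : Q.coeff M = (C₀:ℂ) := by
      simp [hQ, coeff_X_pow, coeff_C, mul_assoc, Polynomial.coeff_C_mul,
        h1M.ne', h2M.ne', hM0]
    rw [h] at this
    simp at this
    exact hC₀ (by exact_mod_cast this.symm)
  have hdeg : Q.natDegree ≤ M := by
    apply le_trans (natDegree_sub_le _ _)
    simp only [natDegree_C, max_le_iff]
    refine ⟨le_trans (natDegree_sub_le _ _) ?_, Nat.zero_le _⟩
    simp only [max_le_iff]
    refine ⟨le_trans (natDegree_add_le _ _) ?_,
      le_trans (natDegree_C_mul_le _ _) (by simp [h2M.le])⟩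
    simp only [max_le_iff]
    exact ⟨le_trans (natDegree_C_mul_le _ _) (by simp [h1M.le]),
      le_trans (natDegree_C_mul_le _ _) (by simp)⟩
  -- key identity
  have key : ∀ θ : ℝ, Q.eval (Complex.exp ((θ:ℂ)*Complex.I))
      = Complex.exp ((m:ℂ)*θ*Complex.I) * (2*Complex.I)
        * ((a * Real.sin (n*θ+c) + C₀ * Real.sin (m*θ) : ℝ) : ℂ) := by
    intro θ
    have hXne := Complex.exp_ne_zero ((m:ℂ)*θ*Complex.I)
    have hYne := Complex.exp_ne_zero ((n:ℂ)*θ*Complex.I)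
    have hZne := Complex.exp_ne_zero ((c:ℂ)*Complex.I)
    have e1 : Complex.exp ((θ:ℂ)*Complex.I) ^ a1
        = Complex.exp ((m:ℂ)*θ*Complex.I) * Complex.exp ((n:ℂ)*θ*Complex.I) := by
      rw [← Complex.exp_nat_mul, ← Complex.exp_add]
      congr 1
      have : ((a1:ℕ):ℂ) = (m:ℂ) + (n:ℂ) := by exact_mod_cast congrArg (Complex.ofReal ·) ha1
      rw [this]; ring
    have e2 : Complex.exp ((θ:ℂ)*Complex.I) ^ M
        = Complex.exp ((m:ℂ)*θ*Complex.I) * Complex.exp ((m:ℂ)*θ*Complex.I) := by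
      rw [← Complex.exp_nat_mul, ← Complex.exp_add]
      congr 1
      have : ((M:ℕ):ℂ) = 2*(m:ℂ) := by exact_mod_cast congrArg (Complex.ofReal ·) hM
      rw [this]; ring
    have e3 : Complex.exp ((θ:ℂ)*Complex.I) ^ a2
        = Complex.exp ((m:ℂ)*θ*Complex.I) * (Complex.exp ((n:ℂ)*θ*Complex.I))⁻¹ := by
      rw [← Complex.exp_nat_mul, ← Complex.exp_neg, ← Complex.exp_add]
      congr 1
      have : ((a2:ℕ):ℂ) = (m:ℂ) - (n:ℂ) := by exact_mod_cast congrArg (Complex.ofReal ·) ha2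
      rw [this]; ring
    have sinrw : ∀ z : ℂ, Complex.sin z
        = (Complex.exp (z*Complex.I) - Complex.exp (-z*Complex.I)) / (2*Complex.I) := by
      intro z
      rw [Complex.sin, eq_div_iff (by simp [Complex.I_ne_zero] : (2:ℂ)*Complex.I ≠ 0)]
      linear_combination (Complex.exp (-z*Complex.I) - Complex.exp (z*Complex.I)) * Complex.I_mul_I
    have f2 : Complex.exp (((n:ℂ)*θ+c) * Complex.I)
        = Complex.exp ((n:ℂ)*θ*Complex.I) * Complex.exp ((c:ℂ)*Complex.I) := by
      rw [← Complex.exp_add]; congr 1; ring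
    have f1 : Complex.exp (-((n:ℂ)*θ+c) * Complex.I)
        = (Complex.exp ((n:ℂ)*θ*Complex.I) * Complex.exp ((c:ℂ)*Complex.I))⁻¹ := by
      rw [neg_mul, Complex.exp_neg, f2]
    have f3 : Complex.exp (-((m:ℂ)*θ) * Complex.I)
        = (Complex.exp ((m:ℂ)*θ*Complex.I))⁻¹ := by
      rw [neg_mul, Complex.exp_neg]
    have f4 : Complex.exp (-(c:ℂ) * Complex.I) = (Complex.exp ((c:ℂ)*Complex.I))⁻¹ := by
      rw [neg_mul, Complex.exp_neg]
    simp only [hQ, eval_sub, eval_add, eval_mul, eval_pow, eval_C, eval_X, e1, e2, e3, f4]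
    push_cast
    rw [sinrw, sinrw, f1, f2, f3]
    field_simp
    ring
  -- injectivity of θ ↦ exp (θ I) on [0, 2π)
  have hinj : Set.InjOn (fun θ : ℝ => Complex.exp ((θ:ℂ)*Complex.I))
      (Set.Ico 0 (2*Real.pi)) := by
    intro x hx y hy hxy
    simp only at hxy
    rw [Complex.exp_eq_exp_iff_exists_int] at hxy
    obtain ⟨k, hk⟩ := hxy
    have hxy' : x = y + k*(2*Real.pi) := by
      have h2 : ((x:ℝ):ℂ) = ((y + k*(2*Real.pi) : ℝ):ℂ) :=
        mul_right_cancel₀ Complex.I_ne_zero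
          (hk.trans (by push_cast; ring))
      exact_mod_cast h2
    have hπ := Real.pi_pos
    obtain ⟨hx0, hx2⟩ := hx
    obtain ⟨hy0, hy2⟩ := hy
    have hk0 : k = 0 := by
      have h1 : (-1:ℝ) < (k:ℝ) := by nlinarith
      have h2 : (k:ℝ) < 1 := by nlinarith
      have h1' : (-1:ℤ) < k := by exact_mod_cast h1
      have h2' : k < (1:ℤ) := by exact_mod_cast h2
      omega
    rw [hk0] at hxy'
    simpa using hxy'
  have hsub : (fun θ : ℝ => Complex.exp ((θ:ℂ)*Complex.I)) '' S ⊆ ↑Q.roots.toFinset := by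
    rintro z ⟨θ, hθ, rfl⟩
    simp only [Finset.coe_sort_coe, Multiset.mem_toFinset, Finset.mem_coe]
    rw [Polynomial.mem_roots']
    refine ⟨hQne, ?_⟩
    have := key θ
    rw [hθ.2] at this
    simpa [Polynomial.IsRoot] using this
  have hSsub : S ⊆ Set.Ico 0 (2*Real.pi) := fun θ hθ => hθ.1
  have hfin : S.Finite := by
    have himfin : ((fun θ : ℝ => Complex.exp ((θ:ℂ)*Complex.I)) '' S).Finite :=
      Set.Finite.subset (Q.roots.toFinset.finite_toSet) hsub
    exact Set.Finite.of_finite_image himfin (hinj.mono hSsub)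
  refine ⟨hfin, ?_⟩
  calc S.ncard = ((fun θ : ℝ => Complex.exp ((θ:ℂ)*Complex.I)) '' S).ncard :=
        (Set.ncard_image_of_injOn (hinj.mono hSsub)).symm
    _ ≤ (↑Q.roots.toFinset : Set ℂ).ncard :=
        Set.ncard_le_ncard hsub (Q.roots.toFinset.finite_toSet)
    _ = Q.roots.toFinset.card := Set.ncard_coe_finset _
    _ ≤ Multiset.card Q.roots := Q.roots.toFinset_card_le
    _ ≤ Q.natDegree := Q.card_roots'
    _ ≤ M := hdeg


set_option maxHeartbeats 2000000 in
lemma lower_aux (a C₀ c m n : ℝ) (ha : a ≠ 0) (hn0 : 0 < n) (hnm : n < m)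
    (N M : ℕ) (hN : (N:ℝ) = 2*n) (hM : (M:ℝ) = 2*m) (hpar : ∃ k : ℕ, M = N + 2*k)
    (hfin : {θ ∈ Set.Ico (0:ℝ) (2*Real.pi) |
        a * Real.sin (n*θ+c) + C₀ * Real.sin (m*θ) = 0}.Finite) :
    N ≤ {θ ∈ Set.Ico (0:ℝ) (2*Real.pi) |
        a * Real.sin (n*θ+c) + C₀ * Real.sin (m*θ) = 0}.ncard := by
  obtain ⟨k₂, hk₂⟩ := hpar
  have hm0 : 0 < m := hn0.trans hnm
  have hπ := Real.pi_pos
  set F : ℝ → ℝ := fun θ => a * Real.sin (n*θ+c) + C₀ * Real.sin (m*θ) with hF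
  set φ : ℕ → ℝ := fun j => ((j:ℝ)*Real.pi - c)/n with hφ
  set ζ : ℕ → ℝ := fun j => ((⌊φ j * m / Real.pi⌋ : ℝ) + 1) * (Real.pi/m) with hζ
  have h1 : ∀ j, φ j < ζ j := by
    intro j
    have hlt := Int.lt_floor_add_one (φ j * m / Real.pi)
    have hrw : φ j = (φ j * m / Real.pi) * (Real.pi/m) := by field_simp
    rw [hrw, hζ]
    exact mul_lt_mul_of_pos_right hlt (div_pos hπ hm0)
  have h2 : ∀ j, ζ j ≤ φ j + Real.pi/m := by
    intro j
    have hle := Int.floor_le (φ j * m / Real.pi)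
    have : ((⌊φ j * m / Real.pi⌋:ℝ) + 1) * (Real.pi/m)
        ≤ (φ j * m / Real.pi + 1) * (Real.pi/m) :=
      mul_le_mul_of_nonneg_right (by linarith) (div_pos hπ hm0).le
    calc ζ j ≤ (φ j * m / Real.pi + 1) * (Real.pi/m) := this
      _ = φ j + Real.pi/m := by field_simp; try ring
  have hφs : ∀ j : ℕ, φ (j+1) = φ j + Real.pi/n := by
    intro j
    simp only [hφ]
    push_cast
    field_simp
    try ring
  have h3 : ∀ j, ζ j < φ (j+1) := by
    intro j
    have : Real.pi/m < Real.pi/n := by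
      apply div_lt_div_of_pos_left hπ hn0 hnm
    rw [hφs j]
    linarith [h2 j]
  have hstep : ∀ j, ζ j < ζ (j+1) := fun j => (h3 j).trans (h1 (j+1))
  have hζsm : StrictMono ζ := strictMono_nat_of_lt_succ hstep
  have hsinζ : ∀ j, Real.sin (m * ζ j) = 0 := by
    intro j
    have harg : m * ζ j = ((⌊φ j * m / Real.pi⌋ + 1 : ℤ):ℝ) * Real.pi := by
      push_cast
      rw [hζ]
      field_simp
      try ring
    rw [harg]
    exact Real.sin_int_mul_pi _
  have hfζ : ∀ j, F (ζ j) = a * Real.sin (n * ζ j + c) := by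
    intro j
    simp [hF, hsinζ j]
  have hphase : ∀ j : ℕ, n * ζ j + c = n*(ζ j - φ j) + (j:ℝ)*Real.pi := by
    intro j
    have : n * φ j = (j:ℝ)*Real.pi - c := by
      rw [hφ]; field_simp
    nlinarith [this]
  have hy : ∀ j, 0 < n*(ζ j - φ j) ∧ n*(ζ j - φ j) < Real.pi := by
    intro j
    constructor
    · exact mul_pos hn0 (sub_pos.2 (h1 j))
    · have h2' : ζ j - φ j ≤ Real.pi/m := by linarith [h2 j]
      have : n*(ζ j - φ j) ≤ n*(Real.pi/m) := mul_le_mul_of_nonneg_left h2' hn0.le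
      have hlt : n*(Real.pi/m) < Real.pi := by
        rw [div_eq_mul_inv]
        rw [show n*(Real.pi*m⁻¹) = (n/m)*Real.pi by field_simp; try ring]
        have : n/m < 1 := (div_lt_one hm0).2 hnm
        nlinarith
      linarith
  have hsin_pos : ∀ j, 0 < Real.sin (n*(ζ j - φ j)) :=
    fun j => Real.sin_pos_of_pos_of_lt_pi (hy j).1 (hy j).2
  have hsj : ∀ j : ℕ, Real.sin ((j:ℝ)*Real.pi) = 0 := by
    intro j
    have := Real.sin_int_mul_pi (j:ℤ)
    push_cast at this
    exact this
  have hcos2 : ∀ j : ℕ, Real.cos ((j:ℝ)*Real.pi)^2 = 1 := by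
    intro j
    have := Real.sin_sq_add_cos_sq ((j:ℝ)*Real.pi)
    rw [hsj j] at this
    nlinarith
  have hsinval : ∀ j : ℕ, Real.sin (n * ζ j + c)
      = Real.sin (n*(ζ j - φ j)) * Real.cos ((j:ℝ)*Real.pi) := by
    intro j
    rw [hphase j, Real.sin_add, hsj j]
    ring
  have hcos_succ : ∀ j : ℕ, Real.cos (((j+1:ℕ):ℝ)*Real.pi) = -Real.cos ((j:ℝ)*Real.pi) := by
    intro j
    push_cast
    rw [show ((j:ℝ)+1)*Real.pi = (j:ℝ)*Real.pi + Real.pi by ring, Real.cos_add_pi]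
  have ha2 : 0 < a^2 := by rw [← sq_abs]; exact pow_pos (abs_pos.2 ha) 2
  have halt : ∀ j : ℕ, F (ζ j) * F (ζ (j+1)) < 0 := by
    intro j
    rw [hfζ j, hfζ (j+1), hsinval j, hsinval (j+1), hcos_succ j]
    have hrw : a * (Real.sin (n*(ζ j - φ j)) * Real.cos ((j:ℝ)*Real.pi))
        * (a * (Real.sin (n*(ζ (j+1) - φ (j+1))) * -Real.cos ((j:ℝ)*Real.pi)))
        = -(a^2 * Real.sin (n*(ζ j - φ j)) * Real.sin (n*(ζ (j+1) - φ (j+1))))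
          * Real.cos ((j:ℝ)*Real.pi)^2 := by ring
    rw [hrw, hcos2 j]
    nlinarith [mul_pos (mul_pos ha2 (hsin_pos j)) (hsin_pos (j+1))]
  have hcont : Continuous F := by
    rw [hF]; fun_prop
  have hzero : ∀ j : ℕ, ∃ x ∈ Set.Ioo (ζ j) (ζ (j+1)), F x = 0 := by
    intro j
    have hle := (hstep j).le
    have hcon : ContinuousOn F (Set.Icc (ζ j) (ζ (j+1))) := hcont.continuousOn
    have hprod := halt j
    rcases lt_trichotomy (F (ζ j)) 0 with hneg | hz | hpos
    · have hpos' : 0 < F (ζ (j+1)) := by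
        by_contra hcon'
        push_neg at hcon'
        have : 0 ≤ (-F (ζ j)) * (-F (ζ (j+1))) :=
          mul_nonneg (by linarith) (by linarith)
        nlinarith [this]
      obtain ⟨x, hx, hx0⟩ := intermediate_value_Ioo hle hcon ⟨hneg, hpos'⟩
      exact ⟨x, hx, hx0⟩
    · exfalso; rw [hz, zero_mul] at hprod; exact absurd hprod (lt_irrefl 0)
    · have hneg' : F (ζ (j+1)) < 0 := by
        by_contra hcon'
        push_neg at hcon'
        nlinarith [mul_nonneg hpos.le hcon']
      obtain ⟨x, hx, hx0⟩ := intermediate_value_Ioo' hle hcon ⟨hneg', hpos⟩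
      exact ⟨x, hx, hx0⟩
  choose g hg hg0 using hzero
  have hgmono : ∀ i j : ℕ, i < j → g i < g j := by
    intro i j hij
    have h1' : g i < ζ (i+1) := (hg i).2
    have h2' : ζ (i+1) ≤ ζ j := hζsm.monotone (by omega)
    have h3' : ζ j < g j := (hg j).1
    linarith
  have hζN : ζ N = ζ 0 + 2*Real.pi := by
    have hφN : φ N = φ 0 + 2*Real.pi := by
      rw [hφ]
      simp only
      field_simp
      linear_combination Real.pi * hN
    have hx : φ N * m / Real.pi = φ 0 * m / Real.pi + (M:ℝ) := by
      rw [hφN, hM]; field_simp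
    have hMpm : (M:ℝ)*(Real.pi/m) = 2*Real.pi := by rw [hM]; field_simp
    rw [hζ]
    simp only
    rw [hx]
    rw [show φ 0 * m / Real.pi + (M:ℝ) = φ 0 * m / Real.pi + ((M:ℕ):ℝ) by norm_num,
      Int.floor_add_natCast]
    push_cast
    linarith [hMpm]
  have hwin : ∀ j : ℕ, j < N → g j ∈ Set.Ioo (ζ 0) (ζ 0 + 2*Real.pi) := by
    intro j hj
    constructor
    · exact lt_of_le_of_lt (hζsm.monotone (Nat.zero_le j)) (hg j).1
    · have : ζ (j+1) ≤ ζ N := hζsm.monotone hj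
      rw [hζN] at this
      linarith [(hg j).2]
  -- reduction mod 2π
  set ρ : ℝ → ℝ := fun y => 2*Real.pi * Int.fract (y/(2*Real.pi)) with hρ
  have hρmem : ∀ y, ρ y ∈ Set.Ico 0 (2*Real.pi) := by
    intro y
    constructor
    · exact mul_nonneg (by linarith) (Int.fract_nonneg _)
    · have := Int.fract_lt_one (y/(2*Real.pi))
      rw [hρ]
      nlinarith [Int.fract_nonneg (y/(2*Real.pi))]
  have hρeq : ∀ y, y = ρ y + 2*Real.pi*((⌊y/(2*Real.pi)⌋:ℤ):ℝ) := by
    intro y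
    have : ρ y = 2*Real.pi * Int.fract (y/(2*Real.pi)) := rfl
    rw [this, ← Int.self_sub_floor]
    field_simp
    ring
  have hper : ∀ (k:ℤ) (θ:ℝ), F (θ + 2*Real.pi*(k:ℝ))
      = Real.cos (((N*k:ℤ):ℝ)*Real.pi) * F θ := by
    intro k θ
    have harg1 : n*(θ + 2*Real.pi*(k:ℝ)) + c = (n*θ+c) + ((N*k:ℤ):ℝ)*Real.pi := by
      push_cast
      linear_combination (-Real.pi*(k:ℝ)) * hN
    have harg2 : m*(θ + 2*Real.pi*(k:ℝ)) = m*θ + ((M*k:ℤ):ℝ)*Real.pi := by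
      push_cast
      linear_combination (-Real.pi*(k:ℝ)) * hM
    have hcosMN : Real.cos (((M*k:ℤ):ℝ)*Real.pi) = Real.cos (((N*k:ℤ):ℝ)*Real.pi) := by
      have : ((M*k:ℤ):ℝ)*Real.pi = ((N*k:ℤ):ℝ)*Real.pi + ((k₂*k:ℤ):ℝ)*(2*Real.pi) := by
        push_cast
        rw [hk₂]
        push_cast
        ring
      rw [this, Real.cos_add_int_mul_two_pi]
    rw [hF]
    simp only
    have s1 : Real.sin ((n*θ+c) + ((N*k:ℤ):ℝ)*Real.pi)
        = Real.sin (n*θ+c) * Real.cos (((N*k:ℤ):ℝ)*Real.pi) := by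
      rw [Real.sin_add, Real.sin_int_mul_pi]; ring
    have s2 : Real.sin (m*θ + ((M*k:ℤ):ℝ)*Real.pi)
        = Real.sin (m*θ) * Real.cos (((M*k:ℤ):ℝ)*Real.pi) := by
      rw [Real.sin_add, Real.sin_int_mul_pi]; ring
    show a * Real.sin (n*(θ + 2*Real.pi*(k:ℝ))+c) + C₀ * Real.sin (m*(θ + 2*Real.pi*(k:ℝ)))
        = Real.cos (((N*k:ℤ):ℝ)*Real.pi) * (a * Real.sin (n*θ+c) + C₀ * Real.sin (m*θ))
    rw [harg1, harg2, s1, s2, hcosMN]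
    ring
  have hcosne : ∀ (k:ℤ), Real.cos (((N*k:ℤ):ℝ)*Real.pi) ≠ 0 := by
    intro k h
    have := Real.sin_sq_add_cos_sq (((N*k:ℤ):ℝ)*Real.pi)
    rw [Real.sin_int_mul_pi, h] at this
    norm_num at this
  have hρzero : ∀ y, F y = 0 → F (ρ y) = 0 := by
    intro y hy
    have hp := hper ⌊y/(2*Real.pi)⌋ (ρ y)
    rw [← hρeq y] at hp
    rw [hy] at hp
    rcases mul_eq_zero.1 hp.symm with h | h
    · exact absurd h (hcosne _)
    · exact h
  -- the injection
  set G : Fin N → ℝ := fun i => ρ (g i.val) with hG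
  have hsep : ∀ i j : ℕ, i < j → j < N → ρ (g i) ≠ ρ (g j) := by
    intro i j hij hjN heq
    have hlt : g i < g j := hgmono i j hij
    have hwi := hwin i (by omega)
    have hwj := hwin j hjN
    have e1 := hρeq (g i)
    have e2 := hρeq (g j)
    set di : ℤ := ⌊g i/(2*Real.pi)⌋ with hdi
    set dj : ℤ := ⌊g j/(2*Real.pi)⌋ with hdj
    have hdiff : g j - g i = 2*Real.pi*((dj - di : ℤ):ℝ) := by
      push_cast
      rw [heq] at e1
      linarith [e1, e2]
    have hub : g j - g i < 2*Real.pi := by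
      obtain ⟨a1, a2⟩ := hwi
      obtain ⟨b1, b2⟩ := hwj
      linarith
    have hd0 : (0:ℝ) < ((dj - di : ℤ):ℝ) := by nlinarith [hdiff, hlt, hπ]
    have hd1 : ((dj - di : ℤ):ℝ) < 1 := by nlinarith [hdiff, hub, hπ]
    have h0' : (0:ℤ) < dj - di := by exact_mod_cast hd0
    have h1' : dj - di < (1:ℤ) := by exact_mod_cast hd1
    omega
  have hGinj : Function.Injective G := by
    intro i j hij
    rcases lt_trichotomy i.val j.val with h | h | h
    · exact absurd hij (hsep i.val j.val h j.isLt)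
    · exact Fin.ext h
    · exact absurd hij.symm (hsep j.val i.val h i.isLt)
  have hGmem : ∀ i : Fin N, G i ∈ {θ ∈ Set.Ico (0:ℝ) (2*Real.pi) |
      a * Real.sin (n*θ+c) + C₀ * Real.sin (m*θ) = 0} := by
    intro i
    refine ⟨hρmem _, ?_⟩
    have := hρzero (g i.val) (hg0 i.val)
    exact this
  -- conclude
  classical
  have hcard : (Finset.image G Finset.univ).card = N := by
    rw [Finset.card_image_of_injective _ hGinj, Finset.card_univ, Fintype.card_fin]
  have hsub : ↑(Finset.image G Finset.univ) ⊆ {θ ∈ Set.Ico (0:ℝ) (2*Real.pi) |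
      a * Real.sin (n*θ+c) + C₀ * Real.sin (m*θ) = 0} := by
    intro x hx
    simp only [Finset.coe_image, Finset.coe_univ, Set.image_univ, Set.mem_range] at hx
    obtain ⟨i, rfl⟩ := hx
    exact hGmem i
  calc N = (Finset.image G Finset.univ).card := hcard.symm
    _ = (↑(Finset.image G Finset.univ) : Set ℝ).ncard := (Set.ncard_coe_finset _).symm
    _ ≤ _ := Set.ncard_le_ncard hsub hfin

/-- for `p > q` and every `s > 0`, the number of zeros of `T(θ, s)` in
`[0, 2π)` lies between `(p+1)(q-1)/r` and `(p-1)(q+1)/r`. -/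
theorem number_of_zeros_bounds
    (p q : ℕ) (hq : 2 ≤ q) (hpq : q < p)
    (r : ℕ) (hr : r = Nat.gcd (p - 1) (q - 1))
    (m n : ℝ)
    (hm : m = ((p : ℝ) - 1) * ((q : ℝ) + 1) / (2 * r))
    (hn : n = ((p : ℝ) + 1) * ((q : ℝ) - 1) / (2 * r))
    (A B : ℝ)
    (hA : A = 1 / (p : ℝ) ^ ((1 : ℝ) / ((p : ℝ) - 1)))
    (hB : B = 1 / (q : ℝ) ^ ((1 : ℝ) / ((q : ℝ) - 1)))
    (C₀ : ℝ) (hC₀ : C₀ = ((p : ℝ) - 1) * B / (((q : ℝ) - 1) * A))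
    (c : ℝ) (ε : ℝ) (hε : ε = 1 ∨ ε = -1)
    (T : ℝ → ℝ → ℝ)
    (hT : ∀ θ s : ℝ, T θ s = ε * s * Real.sin (n * θ + c) + C₀ * Real.sin (m * θ)) :
    ∀ s : ℝ, 0 < s →
      (p + 1) * (q - 1) / r
          ≤ ({θ ∈ Set.Ico (0 : ℝ) (2 * Real.pi) | T θ s = 0}).ncard ∧
      ({θ ∈ Set.Ico (0 : ℝ) (2 * Real.pi) | T θ s = 0}).ncard
          ≤ (p - 1) * (q + 1) / r := by
  intro s hs
  have hp1 : (1:ℝ) < (p:ℝ) := by exact_mod_cast (by omega : 1 < p)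
  have hq1 : (1:ℝ) < (q:ℝ) := by exact_mod_cast (by omega : 1 < q)
  have hpqR : (q:ℝ) < (p:ℝ) := by exact_mod_cast hpq
  have hApos : 0 < A := by
    rw [hA]
    exact div_pos one_pos (Real.rpow_pos_of_pos (by linarith) _)
  have hBpos : 0 < B := by
    rw [hB]
    exact div_pos one_pos (Real.rpow_pos_of_pos (by linarith) _)
  have hC₀pos : 0 < C₀ := by
    rw [hC₀]
    exact div_pos (mul_pos (by linarith) hBpos) (mul_pos (by linarith) hApos)
  have hεs : ε*s ≠ 0 := by
    rcases hε with h | h <;> rw [h] <;> simp [hs.ne']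
  have hr0 : r ≠ 0 := by
    rw [hr]
    simp only [ne_eq, Nat.gcd_eq_zero_iff, not_and]
    intro h; omega
  have hrR : (r:ℝ) ≠ 0 := Nat.cast_ne_zero.2 hr0
  have hrpos : (0:ℝ) < (r:ℝ) := by
    have := Nat.pos_of_ne_zero hr0; exact_mod_cast this
  have hrp : r ∣ p - 1 := hr ▸ Nat.gcd_dvd_left _ _
  have hrq : r ∣ q - 1 := hr ▸ Nat.gcd_dvd_right _ _
  have hdvd1 : r ∣ (p+1)*(q-1) := Dvd.dvd.mul_left hrq _
  have hdvd2 : r ∣ (p-1)*(q+1) := Dvd.dvd.mul_right hrp _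
  have hdvdpq : r ∣ p - q := by
    have h0 := Nat.dvd_sub hrp hrq
    have he : p - 1 - (q - 1) = p - q := by omega
    rwa [he] at h0
  have hdvdpq1 : r ∣ p*q - 1 := by
    have h1 : r ∣ (p-1)*q := Dvd.dvd.mul_right hrp q
    have h2 := Nat.dvd_add h1 hrq
    have he : (p-1)*q + (q-1) = p*q - 1 := by
      have hqle : q ≤ p*q := Nat.le_mul_of_pos_left q (by omega)
      have h3 : (p-1)*q = p*q - q := by rw [Nat.sub_mul, one_mul]
      omega
    rwa [he] at h2
  set N := (p+1)*(q-1)/r with hNdef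
  set M := (p-1)*(q+1)/r with hMdef
  set A1 := (p*q-1)/r with hA1def
  set A2 := (p-q)/r with hA2def
  have hN2 : (N:ℝ) = 2*n := by
    rw [hNdef, Nat.cast_div hdvd1 hrR, Nat.cast_mul, Nat.cast_add,
      Nat.cast_sub (by omega : 1 ≤ q), Nat.cast_one, hn]
    field_simp
  have hM2 : (M:ℝ) = 2*m := by
    rw [hMdef, Nat.cast_div hdvd2 hrR, Nat.cast_mul, Nat.cast_add,
      Nat.cast_sub (by omega : 1 ≤ p), Nat.cast_one, hm]
    field_simp
  have hA1R : (A1:ℝ) = m + n := by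
    rw [hA1def, Nat.cast_div hdvdpq1 hrR,
      Nat.cast_sub (Nat.one_le_iff_ne_zero.2 (Nat.mul_ne_zero (by omega) (by omega))),
      Nat.cast_mul, Nat.cast_one, hm, hn]
    field_simp
    ring
  have hA2R : (A2:ℝ) = m - n := by
    rw [hA2def, Nat.cast_div hdvdpq hrR, Nat.cast_sub (by omega : q ≤ p), hm, hn]
    field_simp
    ring
  have hnpos : 0 < n := by
    rw [hn]
    apply div_pos (by nlinarith) (by linarith)
  have hnm : n < m := by
    rw [hn, hm, div_lt_div_iff₀ (by linarith) (by linarith)]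
    nlinarith
  have h21 : A2 < A1 := by
    have : (A2:ℝ) < (A1:ℝ) := by rw [hA1R, hA2R]; linarith
    exact_mod_cast this
  have h1M : A1 < M := by
    have : (A1:ℝ) < (M:ℝ) := by rw [hA1R, hM2]; linarith
    exact_mod_cast this
  have hpar : ∃ k : ℕ, M = N + 2*k := by
    refine ⟨A2, ?_⟩
    have : (M:ℝ) = (N:ℝ) + 2*(A2:ℝ) := by rw [hM2, hN2, hA2R]; ring
    exact_mod_cast this
  have hset : {θ ∈ Set.Ico (0:ℝ) (2*Real.pi) | T θ s = 0}
      = {θ ∈ Set.Ico (0:ℝ) (2*Real.pi) |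
          (ε*s) * Real.sin (n*θ+c) + C₀ * Real.sin (m*θ) = 0} := by
    ext θ
    simp only [Set.mem_setOf_eq, hT θ s]
  obtain ⟨hfin, hub⟩ := upper_aux (ε*s) C₀ c m n hC₀pos.ne' M A1 A2 hM2 hA1R hA2R h21 h1M
  have hlb := lower_aux (ε*s) C₀ c m n hεs hnpos hnm N M hN2 hM2 hpar hfin
  rw [hset]
  exact ⟨hlb, hub⟩
end

section
/- The map h : ℝ → ℂ, h(θ) = e^{2iθ} + 2e^{−iθ}, is injective on [0, 2π): for all θ₁, θ₂ ∈ [0, 2π), if h(θ₁) = h(θ₂) then θ₁ = θ₂. -/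
/-- the map `h(θ) = e^{2iθ} + 2e^{-iθ}` is injective on `[0, 2π)`. -/
theorem h_injective_on_period
    (h : ℝ → ℂ)
    (hh : ∀ θ : ℝ, h θ = Complex.exp (2 * Complex.I * (θ : ℂ))
      + 2 * Complex.exp (-(Complex.I * (θ : ℂ)))) :
    ∀ θ₁ ∈ Set.Ico (0 : ℝ) (2 * Real.pi), ∀ θ₂ ∈ Set.Ico (0 : ℝ) (2 * Real.pi),
      h θ₁ = h θ₂ → θ₁ = θ₂ := by
  intro θ₁ h1 θ₂ h2 heq
  rw [hh, hh] at heq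
  set a := Complex.exp (Complex.I * θ₁) with ha
  set b := Complex.exp (Complex.I * θ₂) with hb
  have ha2 : Complex.exp (2 * Complex.I * θ₁) = a ^ 2 := by
    rw [ha, sq, ← Complex.exp_add]; ring_nf
  have hb2 : Complex.exp (2 * Complex.I * θ₂) = b ^ 2 := by
    rw [hb, sq, ← Complex.exp_add]; ring_nf
  have hca : Complex.exp (-(Complex.I * θ₁)) = (starRingEnd ℂ) a := by
    rw [ha, ← Complex.exp_conj]; congr 1; simp
  have hcb : Complex.exp (-(Complex.I * θ₂)) = (starRingEnd ℂ) b := by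
    rw [hb, ← Complex.exp_conj]; congr 1; simp
  rw [ha2, hb2, hca, hcb] at heq
  have habs_a : ‖a‖ = 1 := by simp [ha, Complex.norm_exp]
  have habs_b : ‖b‖ = 1 := by simp [hb, Complex.norm_exp]
  have hab : a = b := by
    by_contra hne
    have hd : a - b ≠ 0 := sub_ne_zero.mpr hne
    have key : (a + b) * (a - b) = -2 * (starRingEnd ℂ) (a - b) := by
      rw [map_sub]; linear_combination heq
    have h3 := congrArg (norm : ℂ → ℝ) key
    rw [norm_mul, norm_mul, Complex.norm_conj] at h3
    have h4 : ‖(-2 : ℂ)‖ = 2 := by norm_num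
    rw [h4] at h3
    have h5 : ‖a + b‖ = 2 :=
      mul_right_cancel₀ (norm_ne_zero_iff.mpr hd) h3
    -- |a+b| = 2 with |a|=|b|=1 forces a = b
    have hma : a * (starRingEnd ℂ) a = 1 := by
      rw [Complex.mul_conj]; norm_cast
      rw [Complex.normSq_eq_norm_sq, habs_a]; norm_num
    have hmb : b * (starRingEnd ℂ) b = 1 := by
      rw [Complex.mul_conj]; norm_cast
      rw [Complex.normSq_eq_norm_sq, habs_b]; norm_num
    have hsum : (a + b) * (starRingEnd ℂ) (a + b) = 4 := by
      rw [Complex.mul_conj]; norm_cast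
      rw [Complex.normSq_eq_norm_sq, h5]; norm_num
    have hu : a * (starRingEnd ℂ) b + b * (starRingEnd ℂ) a = 2 := by
      have := hsum
      rw [map_add] at this
      linear_combination this - hma - hmb
    set u := a * (starRingEnd ℂ) b with hu_def
    have hcu : (starRingEnd ℂ) u = b * (starRingEnd ℂ) a := by
      rw [hu_def, map_mul, Complex.conj_conj]; ring
    have huu : u + (starRingEnd ℂ) u = 2 := by rw [hcu]; exact hu
    have habs_u : ‖u‖ = 1 := by
      rw [hu_def, norm_mul, Complex.norm_conj, habs_a, habs_b]; norm_num
    have hre : u.re = 1 := by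
      have := congrArg Complex.re huu
      simp [Complex.add_re, Complex.conj_re] at this
      linarith
    have him : u.im = 0 := by
      have hn : u.re ^ 2 + u.im ^ 2 = 1 := by
        have := Complex.sq_norm u
        rw [habs_u] at this
        simpa [Complex.normSq_apply, sq] using this.symm
      nlinarith
    have hu1 : u = 1 := by
      apply Complex.ext <;> simp [hre, him]
    -- a * conj b = 1 and b * conj b = 1 give a = b
    have hcb_ne : (starRingEnd ℂ) b ≠ 0 := by
      simp [Complex.exp_ne_zero, hb]
    have : (a - b) * (starRingEnd ℂ) b = 0 := by
      rw [sub_mul, hmb, ← hu_def, hu1, sub_self]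
    exact hd (by
      rcases mul_eq_zero.mp this with h' | h'
      · exact h'
      · exact absurd h' hcb_ne)
  -- from exp(Iθ₁) = exp(Iθ₂) deduce θ₁ = θ₂ + 2πn
  rw [ha, hb, Complex.exp_eq_exp_iff_exists_int] at hab
  obtain ⟨n, hn⟩ := hab
  have hI : Complex.I * θ₁ = Complex.I * (θ₂ + n * (2 * Real.pi)) := by
    linear_combination hn
  have hC : (θ₁ : ℂ) = ((θ₂ + n * (2 * Real.pi) : ℝ) : ℂ) := by
    push_cast
    exact mul_left_cancel₀ Complex.I_ne_zero hI
  have hR : θ₁ = θ₂ + n * (2 * Real.pi) := Complex.ofReal_inj.mp hC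
  have hpi := Real.pi_pos
  have hn0 : n = 0 := by
    have h1' : (-1 : ℝ) < n := by nlinarith [h1.1, h1.2, h2.1, h2.2]
    have h2' : (n : ℝ) < 1 := by nlinarith [h1.1, h1.2, h2.1, h2.2]
    exact_mod_cast by
      have := h1'; have := h2'
      have ha' : (-1 : ℤ) < n := by exact_mod_cast h1'
      have hb' : n < 1 := by exact_mod_cast h2'
      omega
  rw [hn0] at hR
  simpa using hR
end
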